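/- arXiv:2501.19369 — 8 statements merged into one kernel-verified Lean document; each statement's English description precedes it below -/
import Mathlib

section
/- Let β > 0. There exists a pair of Lipschitz continuous functions φ : X → ℝ and ψ : Y → ℝ, with Lipschitz constants Lip(φ) ≤ β·Lip(A) and Lip(ψ) ≤ β·Lip(A), such that ∫_X e^{βA(x,y)+φ(x)+ψ(y)} dμ(x) = 1 for every y ∈ Y and ∫_Y e^{βA(x,y)+φ(x)+ψ(y)} dν(y) = 1 for every x ∈ X. -/
open MeasureTheory Filter

section Aux

variable {X : Type*} [MetricSpace X] [CompactSpace X] [MeasurableSpace X] [BorelSpace X]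
variable {Y : Type*}
variable (μ : Measure X) [IsProbabilityMeasure μ]

lemma cont_integrable {f : X → ℝ} (hf : Continuous f) : Integrable f μ :=
  hf.integrable_of_hasCompactSupport
    (IsCompact.of_isClosed_subset isCompact_univ (isClosed_tsupport f) (Set.subset_univ _))

lemma cont_integral_pos [Nonempty X] {f : X → ℝ} (hf : Continuous f) (hpos : ∀ x, 0 < f x) :
    0 < ∫ x, f x ∂μ := by
  obtain ⟨x₀, -, hx₀⟩ := isCompact_univ.exists_isMinOn Set.univ_nonempty hf.continuousOn
  have h1 : ∫ _, f x₀ ∂μ ≤ ∫ x, f x ∂μ :=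
    integral_mono (integrable_const _) (cont_integrable μ hf)
      fun x => isMinOn_iff.mp hx₀ x (Set.mem_univ x)
  have h2 : ∫ _, (f x₀ : ℝ) ∂μ = f x₀ := by simp
  linarith [hpos x₀]

/-- The half-Sinkhorn ("softmin") map. -/
noncomputable def Gm (K : X → Y → ℝ) (φ : X → ℝ) (y : Y) : ℝ :=
  -Real.log (∫ x, K x y * Real.exp (φ x) ∂μ)

variable [Nonempty X] {K : X → Y → ℝ} {m M : ℝ}

lemma I_pos (hm : 0 < m) (hK : ∀ y, Continuous fun x => K x y) (hKm : ∀ x y, m ≤ K x y)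
    {φ : X → ℝ} (hφ : Continuous φ) (y : Y) :
    0 < ∫ x, K x y * Real.exp (φ x) ∂μ :=
  cont_integral_pos μ ((hK y).mul (Real.continuous_exp.comp hφ))
    (fun x => mul_pos (lt_of_lt_of_le hm (hKm x y)) (Real.exp_pos _))

lemma exp_neg_Gm (hm : 0 < m) (hK : ∀ y, Continuous fun x => K x y) (hKm : ∀ x y, m ≤ K x y)
    {φ : X → ℝ} (hφ : Continuous φ) (y : Y) :
    Real.exp (-(Gm μ K φ y)) = ∫ x, K x y * Real.exp (φ x) ∂μ := by
  rw [Gm, neg_neg, Real.exp_log (I_pos μ hm hK hKm hφ y)]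

lemma Gm_diff_le (hm : 0 < m) (hK : ∀ y, Continuous fun x => K x y) (hKm : ∀ x y, m ≤ K x y)
    {φ : X → ℝ} (hφ : Continuous φ) {y y' : Y} {r : ℝ}
    (hr : ∀ x, K x y' ≤ Real.exp r * K x y) :
    Gm μ K φ y - Gm μ K φ y' ≤ r := by
  have h1 : ∫ x, K x y' * Real.exp (φ x) ∂μ ≤
      Real.exp r * ∫ x, K x y * Real.exp (φ x) ∂μ := by
    rw [← integral_const_mul]
    refine integral_mono (cont_integrable μ ((hK y').mul (Real.continuous_exp.comp hφ)))
      (cont_integrable μ (continuous_const.mul ((hK y).mul (Real.continuous_exp.comp hφ))))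
      fun x => ?_
    have := hr x
    have he : (0:ℝ) < Real.exp (φ x) := Real.exp_pos _
    calc K x y' * Real.exp (φ x) ≤ (Real.exp r * K x y) * Real.exp (φ x) := by nlinarith
      _ = Real.exp r * (K x y * Real.exp (φ x)) := by ring
  have hP := I_pos μ hm hK hKm hφ y
  have hP' := I_pos μ hm hK hKm hφ y'
  have := Real.log_le_log hP' h1
  rw [Real.log_mul (ne_of_gt (Real.exp_pos _)) (ne_of_gt hP), Real.log_exp] at this
  unfold Gm
  linarith

set_option maxHeartbeats 1000000 in
lemma Gm_contract (hm : 0 < m) (hK : ∀ y, Continuous fun x => K x y)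
    (hKm : ∀ x y, m ≤ K x y) (hKM : ∀ x y, K x y ≤ M)
    {φ1 φ2 : X → ℝ} (h1 : Continuous φ1) (h2 : Continuous φ2)
    {a b : ℝ} (ha : ∀ x, a ≤ φ1 x - φ2 x) (hb : ∀ x, φ1 x - φ2 x ≤ b) (y y' : Y) :
    (Gm μ K φ1 y' - Gm μ K φ2 y') - (Gm μ K φ1 y - Gm μ K φ2 y) ≤
      (1 - (m / M) ^ 2) * (b - a) := by
  obtain ⟨x₁⟩ := (inferInstance : Nonempty X)
  have hM : 0 < M := lt_of_lt_of_le hm ((hKm x₁ y).trans (hKM x₁ y))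
  set ε : ℝ := (m / M) ^ 2 with hε
  have hε0 : 0 < ε := by positivity
  have hε1 : ε ≤ 1 := by
    have : m / M ≤ 1 := (div_le_one hM).2 ((hKm x₁ y).trans (hKM x₁ y))
    nlinarith [div_pos hm hM]
  have hab : a ≤ b := le_trans (ha x₁) (hb x₁)
  -- the four integrals
  set P := ∫ x, K x y * Real.exp (φ1 x) ∂μ with hPdef
  set Q := ∫ x, K x y * Real.exp (φ2 x) ∂μ with hQdef
  set P' := ∫ x, K x y' * Real.exp (φ1 x) ∂μ with hP'def
  set Q' := ∫ x, K x y' * Real.exp (φ2 x) ∂μ with hQ'def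
  have hP : 0 < P := I_pos μ hm hK hKm h1 y
  have hQ : 0 < Q := I_pos μ hm hK hKm h2 y
  have hP' : 0 < P' := I_pos μ hm hK hKm h1 y'
  have hQ' : 0 < Q' := I_pos μ hm hK hKm h2 y'
  -- E and P/P' ≤ M/m
  set E := ∫ x, Real.exp (φ1 x) ∂μ with hEdef
  have hE : 0 < E := cont_integral_pos μ (Real.continuous_exp.comp h1) fun x => Real.exp_pos _
  have hie1 : Integrable (fun x => Real.exp (φ1 x)) μ :=
    cont_integrable μ (Real.continuous_exp.comp h1)
  have hiK1 : ∀ z, Integrable (fun x => K x z * Real.exp (φ1 x)) μ := fun z =>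
    cont_integrable μ ((hK z).mul (Real.continuous_exp.comp h1))
  have hiK2 : ∀ z, Integrable (fun x => K x z * Real.exp (φ2 x)) μ := fun z =>
    cont_integrable μ ((hK z).mul (Real.continuous_exp.comp h2))
  have hPME : P ≤ M * E := by
    rw [hPdef, hEdef, ← integral_const_mul]
    exact integral_mono (hiK1 y) (hie1.const_mul M) fun x =>
      mul_le_mul_of_nonneg_right (hKM x y) (Real.exp_pos _).le
  have hP'mE : m * E ≤ P' := by
    rw [hP'def, hEdef, ← integral_const_mul]
    exact integral_mono (hie1.const_mul m) (hiK1 y') fun x =>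
      mul_le_mul_of_nonneg_right (hKm x y') (Real.exp_pos _).le
  have hPP' : P / P' ≤ M / m := by
    rw [div_le_div_iff₀ hP' hm]
    nlinarith
  set θ : ℝ := ε * (P / P') with hθdef
  have hθ0 : 0 < θ := mul_pos hε0 (div_pos hP hP')
  have hθm : θ * M ≤ m := by
    have h5 : θ ≤ m / M := by
      have : ε * (P / P') ≤ ε * (M / m) :=
        mul_le_mul_of_nonneg_left hPP' hε0.le
      calc θ ≤ ε * (M / m) := this
        _ = m / M := by field_simp [hε]; rw [hε, div_pow, div_mul_cancel₀ _ (pow_ne_zero 2 hM.ne')]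
    calc θ * M ≤ (m / M) * M := mul_le_mul_of_nonneg_right h5 hM.le
      _ = m := by field_simp
  have hθP' : θ * P' = ε * P := by
    rw [hθdef]; field_simp
  -- key integral inequality : θ * Q' + exp(-b) * ((1-ε) * P) ≤ Q
  have hkey : θ * Q' + Real.exp (-b) * ((1 - ε) * P) ≤ Q := by
    have hcg : Continuous fun x => K x y - θ * K x y' :=
      (hK y).sub (continuous_const.mul (hK y'))
    have int2 : Integrable (fun x => (K x y - θ * K x y') * Real.exp (φ2 x)) μ :=
      cont_integrable μ (hcg.mul (Real.continuous_exp.comp h2))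
    have int1 : Integrable (fun x => (K x y - θ * K x y') * Real.exp (φ1 x)) μ :=
      cont_integrable μ (hcg.mul (Real.continuous_exp.comp h1))
    have int2' : Integrable (fun x => θ * (K x y' * Real.exp (φ2 x))) μ :=
      (hiK2 y').const_mul θ
    have int1' : Integrable (fun x => θ * (K x y' * Real.exp (φ1 x))) μ :=
      (hiK1 y').const_mul θ
    have hsplit : Q = θ * Q' + ∫ x, (K x y - θ * K x y') * Real.exp (φ2 x) ∂μ := by
      have e1 : Q = ∫ x, (θ * (K x y' * Real.exp (φ2 x))
          + (K x y - θ * K x y') * Real.exp (φ2 x)) ∂μ := by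
        rw [hQdef]; congr 1; funext x; ring
      rw [e1, integral_add int2' int2, integral_const_mul, ← hQ'def]
    have hsplit1 : P = θ * P' + ∫ x, (K x y - θ * K x y') * Real.exp (φ1 x) ∂μ := by
      have e1 : P = ∫ x, (θ * (K x y' * Real.exp (φ1 x))
          + (K x y - θ * K x y') * Real.exp (φ1 x)) ∂μ := by
        rw [hPdef]; congr 1; funext x; ring
      rw [e1, integral_add int1' int1, integral_const_mul, ← hP'def]
    have hg0 : ∀ x, 0 ≤ K x y - θ * K x y' := by
      intro x
      have h3 : θ * K x y' ≤ θ * M := mul_le_mul_of_nonneg_left (hKM x y') hθ0.le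
      have := hKm x y
      linarith
    have hmono : Real.exp (-b) * ∫ x, (K x y - θ * K x y') * Real.exp (φ1 x) ∂μ ≤
        ∫ x, (K x y - θ * K x y') * Real.exp (φ2 x) ∂μ := by
      rw [← integral_const_mul]
      refine integral_mono (int1.const_mul _) int2 fun x => ?_
      have hexp : Real.exp (-b) * Real.exp (φ1 x) ≤ Real.exp (φ2 x) := by
        rw [← Real.exp_add]
        exact Real.exp_le_exp.2 (by linarith [hb x])
      calc Real.exp (-b) * ((K x y - θ * K x y') * Real.exp (φ1 x))
          = (K x y - θ * K x y') * (Real.exp (-b) * Real.exp (φ1 x)) := by ring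
        _ ≤ (K x y - θ * K x y') * Real.exp (φ2 x) :=
            mul_le_mul_of_nonneg_left hexp (hg0 x)
    have h4 : Real.exp (-b) * (P - θ * P') ≤ Q - θ * Q' := by
      have hPsub : P - θ * P' = ∫ x, (K x y - θ * K x y') * Real.exp (φ1 x) ∂μ := by
        linarith [hsplit1]
      have hQsub : Q - θ * Q' = ∫ x, (K x y - θ * K x y') * Real.exp (φ2 x) ∂μ := by
        linarith [hsplit]
      rw [hPsub, hQsub]; exact hmono
    have h5 : P - θ * P' = (1 - ε) * P := by rw [hθP']; ring
    rw [h5] at h4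
    linarith
  -- Q' ≤ exp(-a) * P'
  have hQ'P' : Q' ≤ Real.exp (-a) * P' := by
    rw [hQ'def, hP'def, ← integral_const_mul]
    refine integral_mono (hiK2 y') ((hiK1 y').const_mul _) fun x => ?_
    have hexp : Real.exp (φ2 x) ≤ Real.exp (-a) * Real.exp (φ1 x) := by
      rw [← Real.exp_add]
      exact Real.exp_le_exp.2 (by linarith [ha x])
    calc K x y' * Real.exp (φ2 x) ≤ K x y' * (Real.exp (-a) * Real.exp (φ1 x)) :=
          mul_le_mul_of_nonneg_left hexp (le_trans hm.le (hKm x y'))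
      _ = Real.exp (-a) * (K x y' * Real.exp (φ1 x)) := by ring
  -- convexity of exp
  set C : ℝ := Real.exp ((1 - ε) * (b - a)) with hCdef
  have hC1 : 1 ≤ C := by
    rw [hCdef]
    calc (1:ℝ) = Real.exp 0 := Real.exp_zero.symm
      _ ≤ _ := Real.exp_le_exp.2 (mul_nonneg (by linarith) (by linarith))
  have hconv : Real.exp (-((1 - ε) * (b - a))) ≤ ε + (1 - ε) * Real.exp (-(b - a)) := by
    have h := convexOn_exp.2 (Set.mem_univ (0:ℝ)) (Set.mem_univ (-(b - a))) hε0.le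
      (by linarith : (0:ℝ) ≤ 1 - ε) (by ring)
    simp only [smul_eq_mul] at h
    rw [show ε * 0 + (1 - ε) * -(b - a) = -((1 - ε) * (b - a)) by ring, Real.exp_zero,
      mul_one] at h
    exact h
  -- hkey2 : exp(-a) ≤ C * ε * exp(-a) + C * (1-ε) * exp(-b)
  have hkey2 : Real.exp (-a) ≤ C * ε * Real.exp (-a) + C * (1 - ε) * Real.exp (-b) := by
    have hCpos : 0 < C := Real.exp_pos _
    have h6 : 1 ≤ C * (ε + (1 - ε) * Real.exp (-(b - a))) := by
      have := mul_le_mul_of_nonneg_left hconv hCpos.le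
      rwa [← Real.exp_add, show (1 - ε) * (b - a) + -((1 - ε) * (b - a)) = 0 by ring,
        Real.exp_zero] at this
    have h7 : Real.exp (-a) ≤ C * (ε + (1 - ε) * Real.exp (-(b - a))) * Real.exp (-a) := by
      nlinarith [Real.exp_pos (-a)]
    calc Real.exp (-a) ≤ C * (ε + (1 - ε) * Real.exp (-(b - a))) * Real.exp (-a) := h7
      _ = C * ε * Real.exp (-a) + C * (1 - ε) * (Real.exp (-(b - a)) * Real.exp (-a)) := by ring
      _ = C * ε * Real.exp (-a) + C * (1 - ε) * Real.exp (-b) := by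
          rw [← Real.exp_add]; ring_nf
  -- Q' ≤ C*ε*Q' + C*(1-ε)*exp(-b)*P'
  have hQ'bound : Q' ≤ C * ε * Q' + C * (1 - ε) * Real.exp (-b) * P' := by
    rcases le_or_gt (1 - C * ε) 0 with hcase | hcase
    · nlinarith [Real.exp_pos (-b), mul_nonneg (mul_nonneg (hC1.trans' zero_le_one : (0:ℝ) ≤ C)
        (by linarith : (0:ℝ) ≤ 1 - ε)) (Real.exp_pos (-b)).le]
    · have h8 : Q' * (1 - C * ε) ≤ Real.exp (-a) * P' * (1 - C * ε) :=
        mul_le_mul_of_nonneg_right hQ'P' hcase.le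
      have h9 : Real.exp (-a) * (1 - C * ε) ≤ C * (1 - ε) * Real.exp (-b) := by linarith
      nlinarith
  -- final : Q' * P ≤ C * (P' * Q)
  have hfinal : Q' * P ≤ C * (P' * Q) := by
    have h10 : P' * Q ≥ ε * P * Q' + (1 - ε) * Real.exp (-b) * P * P' := by
      have := mul_le_mul_of_nonneg_left hkey hP'.le
      have hθQ' : P' * (θ * Q') = ε * P * Q' := by rw [hθdef]; field_simp
      nlinarith
    have h11 : Q' * P ≤ C * ε * Q' * P + C * (1 - ε) * Real.exp (-b) * P' * P := by
      nlinarith [hQ'bound, hP]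
    have hC0 : (0:ℝ) ≤ C := by linarith
    nlinarith
  -- take logs
  have hlog := Real.log_le_log (by positivity) hfinal
  rw [Real.log_mul hQ'.ne' hP.ne',
      Real.log_mul (Real.exp_pos _).ne' (mul_pos hP' hQ).ne',
      Real.log_mul hP'.ne' hQ.ne', Real.log_exp] at hlog
  unfold Gm
  rw [← hPdef, ← hQdef, ← hP'def, ← hQ'def]
  linarith

end Aux

theorem stmt0
    {X Y : Type*}
    [MetricSpace X] [CompactSpace X] [MeasurableSpace X] [BorelSpace X]
    [MetricSpace Y] [CompactSpace Y] [MeasurableSpace Y] [BorelSpace Y]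
    (μ : Measure X) [IsProbabilityMeasure μ] [μ.IsOpenPosMeasure]
    (ν : Measure Y) [IsProbabilityMeasure ν] [ν.IsOpenPosMeasure]
    (c : X × Y → ℝ) (L : ℝ)
    (hc : ∀ p q : X × Y, |c p - c q| ≤ L * (dist p.1 q.1 + dist p.2 q.2))
    (A : X × Y → ℝ) (hA : A = fun p => - c p)
    (β : ℝ) (hβ : 0 < β) :
    ∃ (φ : X → ℝ) (ψ : Y → ℝ),
      Continuous φ ∧ Continuous ψ ∧
      (∀ x₁ x₂ : X, |φ x₁ - φ x₂| ≤ β * L * dist x₁ x₂) ∧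
      (∀ y₁ y₂ : Y, |ψ y₁ - ψ y₂| ≤ β * L * dist y₁ y₂) ∧
      (∀ y : Y, ∫ x, Real.exp (β * A (x, y) + φ x + ψ y) ∂μ = 1) ∧
      (∀ x : X, ∫ y, Real.exp (β * A (x, y) + φ x + ψ y) ∂ν = 1) := by
  -- nonemptiness
  have hXne : Nonempty X := by
    by_contra h
    rw [not_nonempty_iff] at h
    have h0 : μ Set.univ = 1 := measure_univ
    rw [Set.univ_eq_empty_iff.2 h, measure_empty] at h0
    exact zero_ne_one h0
  have hYne : Nonempty Y := by
    by_contra h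
    rw [not_nonempty_iff] at h
    have h0 : ν Set.univ = 1 := measure_univ
    rw [Set.univ_eq_empty_iff.2 h, measure_empty] at h0
    exact zero_ne_one h0
  haveI := hXne
  haveI := hYne
  obtain ⟨x₀⟩ := id hXne
  -- continuity of c and A
  have hccont : Continuous c := by
    have hlip : LipschitzWith (Real.toNNReal (2 * max L 0)) c := by
      refine LipschitzWith.of_dist_le_mul fun p q => ?_
      rw [Real.dist_eq, Real.coe_toNNReal _ (by positivity)]
      have h1 := hc p q
      have hd1 : dist p.1 q.1 ≤ dist p q := le_max_left _ _
      have hd2 : dist p.2 q.2 ≤ dist p q := le_max_right _ _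
      have hL : L * (dist p.1 q.1 + dist p.2 q.2) ≤ max L 0 * (dist p.1 q.1 + dist p.2 q.2) :=
        mul_le_mul_of_nonneg_right (le_max_left _ _) (by positivity)
      have : max L 0 * (dist p.1 q.1 + dist p.2 q.2) ≤ max L 0 * (2 * dist p q) :=
        mul_le_mul_of_nonneg_left (by linarith) (le_max_right _ _)
      calc |c p - c q| ≤ L * (dist p.1 q.1 + dist p.2 q.2) := h1
        _ ≤ max L 0 * (2 * dist p q) := by linarith
        _ = 2 * max L 0 * dist p q := by ring
    exact hlip.continuous
  have hAcont : Continuous A := by rw [hA]; exact hccont.neg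
  -- the kernel and its bounds
  set k : X → Y → ℝ := fun x y => Real.exp (β * A (x, y)) with hkdef
  have hkX : ∀ y, Continuous fun x => k x y := fun y =>
    Real.continuous_exp.comp (continuous_const.mul (hAcont.comp (Continuous.prodMk_left y)))
  have hkY : ∀ x, Continuous fun y => k x y := fun x =>
    Real.continuous_exp.comp (continuous_const.mul (hAcont.comp (Continuous.prodMk_right x)))
  obtain ⟨pmin, -, hpmin'⟩ := isCompact_univ.exists_isMinOn Set.univ_nonempty hAcont.continuousOn
  obtain ⟨pmax, -, hpmax'⟩ := isCompact_univ.exists_isMaxOn Set.univ_nonempty hAcont.continuousOn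
  have hpmin : ∀ p, A pmin ≤ A p := fun p => isMinOn_iff.mp hpmin' p (Set.mem_univ p)
  have hpmax : ∀ p, A p ≤ A pmax := fun p => isMaxOn_iff.mp hpmax' p (Set.mem_univ p)
  set m : ℝ := Real.exp (β * A pmin) with hmdef
  set M : ℝ := Real.exp (β * A pmax) with hMdef
  have hm : 0 < m := Real.exp_pos _
  have hM : 0 < M := Real.exp_pos _
  have hKmX : ∀ (x : X) (y : Y), m ≤ k x y := fun x y =>
    Real.exp_le_exp.2 (mul_le_mul_of_nonneg_left (hpmin (x, y)) hβ.le)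
  have hKMX : ∀ (x : X) (y : Y), k x y ≤ M := fun x y =>
    Real.exp_le_exp.2 (mul_le_mul_of_nonneg_left (hpmax (x, y)) hβ.le)
  have hmM : m ≤ M := (hKmX x₀ (Classical.arbitrary Y)).trans (hKMX x₀ _)
  set lam : ℝ := 1 - (m / M) ^ 2 with hlamdef
  have hlam0 : 0 ≤ lam := by
    have h1 : m / M ≤ 1 := (div_le_one hM).2 hmM
    have h2 : 0 < m / M := div_pos hm hM
    rw [hlamdef]; nlinarith
  have hlam1 : lam < 1 := by
    have h2 : 0 < m / M := div_pos hm hM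
    rw [hlamdef]; nlinarith
  -- the reversed kernel
  set k' : Y → X → ℝ := fun y x => k x y with hk'def
  have hk'Y : ∀ x, Continuous fun y => k' y x := fun x => hkY x
  have hKmY : ∀ (y : Y) (x : X), m ≤ k' y x := fun y x => hKmX x y
  have hKMY : ∀ (y : Y) (x : X), k' y x ≤ M := fun y x => hKMX x y
  -- one-sided Lipschitz bounds for the two half-maps
  have hGdiff : ∀ (φ : X → ℝ), Continuous φ → ∀ y y' : Y,
      Gm μ k φ y - Gm μ k φ y' ≤ β * L * dist y y' := by
    intro φ hφ y y'
    refine Gm_diff_le μ hm hkX hKmX hφ fun x => ?_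
    rw [← Real.exp_add]
    refine Real.exp_le_exp.2 ?_
    have h1 := hc (x, y) (x, y')
    simp only [dist_self, zero_add] at h1
    have h2 : A (x, y') - A (x, y) ≤ L * dist y y' := by
      rw [hA]
      simp only
      have := (abs_le.mp h1).2
      have := (abs_le.mp h1).1
      linarith
    nlinarith [mul_le_mul_of_nonneg_left h2 hβ.le]
  have hHdiff : ∀ (ψ : Y → ℝ), Continuous ψ → ∀ x x' : X,
      Gm ν k' ψ x - Gm ν k' ψ x' ≤ β * L * dist x x' := by
    intro ψ hψ x x'
    refine Gm_diff_le ν hm hk'Y hKmY hψ fun y => ?_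
    rw [← Real.exp_add]
    refine Real.exp_le_exp.2 ?_
    have h1 := hc (x, y) (x', y)
    simp only [dist_self, add_zero] at h1
    have h2 : A (x', y) - A (x, y) ≤ L * dist x x' := by
      rw [hA]
      simp only
      have := (abs_le.mp h1).2
      have := (abs_le.mp h1).1
      linarith
    nlinarith [mul_le_mul_of_nonneg_left h2 hβ.le]
  -- continuity of the half-maps' outputs
  have hGcont : ∀ (φ : X → ℝ), Continuous φ → Continuous (Gm μ k φ) := by
    intro φ hφ
    refine (LipschitzWith.of_dist_le_mul (K := Real.toNNReal (β * L))
      (f := Gm μ k φ) fun y y' => ?_).continuous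
    rw [Real.dist_eq, Real.coe_toNNReal']
    have h1 := hGdiff φ hφ y y'
    have h2 := hGdiff φ hφ y' y
    rw [dist_comm y' y] at h2
    have hd : 0 ≤ dist y y' := dist_nonneg
    have : β * L * dist y y' ≤ max (β * L) 0 * dist y y' :=
      mul_le_mul_of_nonneg_right (le_max_left _ _) hd
    rw [abs_le]
    constructor <;> linarith
  have hHcont : ∀ (ψ : Y → ℝ), Continuous ψ → Continuous (Gm ν k' ψ) := by
    intro ψ hψ
    refine (LipschitzWith.of_dist_le_mul (K := Real.toNNReal (β * L))
      (f := Gm ν k' ψ) fun x x' => ?_).continuous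
    rw [Real.dist_eq, Real.coe_toNNReal']
    have h1 := hHdiff ψ hψ x x'
    have h2 := hHdiff ψ hψ x' x
    rw [dist_comm x' x] at h2
    have hd : 0 ≤ dist x x' := dist_nonneg
    have : β * L * dist x x' ≤ max (β * L) 0 * dist x x' :=
      mul_le_mul_of_nonneg_right (le_max_left _ _) hd
    rw [abs_le]
    constructor <;> linarith
  -- the Sinkhorn operator, normalized at x₀
  set T : C(X, ℝ) → X → ℝ := fun φ => Gm ν k' (Gm μ k ⇑φ) with hTdef
  have hTcont : ∀ φ : C(X, ℝ), Continuous (T φ) := fun φ =>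
    hHcont _ (hGcont _ φ.continuous)
  set S : C(X, ℝ) → C(X, ℝ) :=
    fun φ => ⟨fun x => T φ x - T φ x₀, (hTcont φ).sub continuous_const⟩ with hSdef
  have hSapp : ∀ (φ : C(X, ℝ)) (x : X), S φ x = T φ x - T φ x₀ := fun φ x => rfl
  -- oscillation contraction of the half-steps
  have hstepG : ∀ (φ1 φ2 : X → ℝ), Continuous φ1 → Continuous φ2 → ∀ s : ℝ,
      (∀ x x', (φ1 x - φ2 x) - (φ1 x' - φ2 x') ≤ s) →
      ∀ y y' : Y, (Gm μ k φ1 y - Gm μ k φ2 y) - (Gm μ k φ1 y' - Gm μ k φ2 y') ≤ lam * s := by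
    intro φ1 φ2 h1 h2 s hs y y'
    obtain ⟨xa, -, hxa⟩ := isCompact_univ.exists_isMinOn Set.univ_nonempty (h1.sub h2).continuousOn
    obtain ⟨xb, -, hxb⟩ := isCompact_univ.exists_isMaxOn Set.univ_nonempty (h1.sub h2).continuousOn
    have hle := Gm_contract μ hm hkX hKmX hKMX h1 h2
      (a := φ1 xa - φ2 xa) (b := φ1 xb - φ2 xb)
      (fun x => isMinOn_iff.mp hxa x (Set.mem_univ x))
      (fun x => isMaxOn_iff.mp hxb x (Set.mem_univ x)) y' y
    have hba : (φ1 xb - φ2 xb) - (φ1 xa - φ2 xa) ≤ s := hs xb xa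
    have hba0 : 0 ≤ (φ1 xb - φ2 xb) - (φ1 xa - φ2 xa) := by
      have h3 := isMinOn_iff.mp hxa xb (Set.mem_univ xb)
      have h4 := isMaxOn_iff.mp hxb xa (Set.mem_univ xa)
      simp only [Pi.sub_apply] at h3 h4
      linarith [h3]
    have : lam * ((φ1 xb - φ2 xb) - (φ1 xa - φ2 xa)) ≤ lam * s :=
      mul_le_mul_of_nonneg_left hba hlam0
    rw [hlamdef] at this ⊢
    linarith
  have hstepH : ∀ (ψ1 ψ2 : Y → ℝ), Continuous ψ1 → Continuous ψ2 → ∀ s : ℝ,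
      (∀ y y', (ψ1 y - ψ2 y) - (ψ1 y' - ψ2 y') ≤ s) →
      ∀ x x' : X, (Gm ν k' ψ1 x - Gm ν k' ψ2 x) - (Gm ν k' ψ1 x' - Gm ν k' ψ2 x') ≤ lam * s := by
    intro ψ1 ψ2 h1 h2 s hs x x'
    obtain ⟨ya, -, hya⟩ := isCompact_univ.exists_isMinOn Set.univ_nonempty (h1.sub h2).continuousOn
    obtain ⟨yb, -, hyb⟩ := isCompact_univ.exists_isMaxOn Set.univ_nonempty (h1.sub h2).continuousOn
    have hle := Gm_contract ν hm hk'Y hKmY hKMY h1 h2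
      (a := ψ1 ya - ψ2 ya) (b := ψ1 yb - ψ2 yb)
      (fun y => isMinOn_iff.mp hya y (Set.mem_univ y))
      (fun y => isMaxOn_iff.mp hyb y (Set.mem_univ y)) x' x
    have hba : (ψ1 yb - ψ2 yb) - (ψ1 ya - ψ2 ya) ≤ s := hs yb ya
    have : lam * ((ψ1 yb - ψ2 yb) - (ψ1 ya - ψ2 ya)) ≤ lam * s :=
      mul_le_mul_of_nonneg_left hba hlam0
    rw [hlamdef] at this ⊢
    linarith
  -- base oscillation bound
  have hosc0 : ∀ (φ1 φ2 : C(X, ℝ)) (x x' : X),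
      (φ1 x - φ2 x) - (φ1 x' - φ2 x') ≤ 2 * dist φ1 φ2 := by
    intro φ1 φ2 x x'
    have h1 := ContinuousMap.dist_apply_le_dist (f := φ1) (g := φ2) x
    have h2 := ContinuousMap.dist_apply_le_dist (f := φ1) (g := φ2) x'
    rw [Real.dist_eq] at h1 h2
    have h3 := (abs_le.mp h1).2
    have h4 := (abs_le.mp h2).1
    linarith
  -- oscillation contraction of S
  have hSosc : ∀ (φ1 φ2 : C(X, ℝ)) (s : ℝ),
      (∀ x x', (φ1 x - φ2 x) - (φ1 x' - φ2 x') ≤ s) →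
      ∀ x x', (S φ1 x - S φ2 x) - (S φ1 x' - S φ2 x') ≤ lam * lam * s := by
    intro φ1 φ2 s hs x x'
    have hG := hstepG ⇑φ1 ⇑φ2 φ1.continuous φ2.continuous s hs
    have hH := hstepH (Gm μ k ⇑φ1) (Gm μ k ⇑φ2) (hGcont _ φ1.continuous)
      (hGcont _ φ2.continuous) (lam * s) hG x x'
    rw [hSapp, hSapp, hSapp, hSapp]
    rw [hTdef]
    simp only
    linarith
  -- iterated oscillation contraction
  have hiter : ∀ (n : ℕ) (φ1 φ2 : C(X, ℝ)) (x x' : X),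
      (S^[n] φ1 x - S^[n] φ2 x) - (S^[n] φ1 x' - S^[n] φ2 x') ≤
        (lam * lam) ^ n * (2 * dist φ1 φ2) := by
    intro n
    induction n with
    | zero => intro φ1 φ2 x x'; simpa using hosc0 φ1 φ2 x x'
    | succ n ih =>
      intro φ1 φ2 x x'
      have h1 := hSosc (S^[n] φ1) (S^[n] φ2) ((lam * lam) ^ n * (2 * dist φ1 φ2))
        (ih φ1 φ2) x x'
      rw [Function.iterate_succ_apply', Function.iterate_succ_apply']
      calc (S (S^[n] φ1)) x - (S (S^[n] φ2)) x -
            ((S (S^[n] φ1)) x' - (S (S^[n] φ2)) x')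
          ≤ lam * lam * ((lam * lam) ^ n * (2 * dist φ1 φ2)) := h1
        _ = (lam * lam) ^ (n + 1) * (2 * dist φ1 φ2) := by ring
  -- S kills the value at x₀
  have hSx₀ : ∀ φ : C(X, ℝ), S φ x₀ = 0 := by
    intro φ
    rw [hSapp]
    ring
  -- distance contraction for iterates of S
  have hdist : ∀ (n : ℕ) (φ1 φ2 : C(X, ℝ)),
      dist (S^[n + 1] φ1) (S^[n + 1] φ2) ≤ (lam * lam) ^ (n + 1) * 2 * dist φ1 φ2 := by
    intro n φ1 φ2
    have hnn : (0:ℝ) ≤ (lam * lam) ^ (n + 1) * 2 * dist φ1 φ2 := by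
      have := pow_nonneg (mul_nonneg hlam0 hlam0) (n + 1)
      positivity
    rw [ContinuousMap.dist_le hnn]
    intro x
    rw [Real.dist_eq]
    have e1 : S^[n + 1] φ1 x₀ = 0 := by rw [Function.iterate_succ_apply']; exact hSx₀ _
    have e2 : S^[n + 1] φ2 x₀ = 0 := by rw [Function.iterate_succ_apply']; exact hSx₀ _
    have h1 := hiter (n + 1) φ1 φ2 x x₀
    have h2 := hiter (n + 1) φ1 φ2 x₀ x
    rw [e1, e2] at h1 h2
    rw [abs_le]
    constructor <;> nlinarith
  -- choose an iterate which is a contraction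
  have hll1 : lam * lam < 1 := by nlinarith
  obtain ⟨n, hn⟩ := exists_pow_lt_of_lt_one (by norm_num : (0:ℝ) < 1/4) hll1
  set Kc : ℝ := (lam * lam) ^ (n + 1) * 2 with hKcdef
  have hKc0 : 0 ≤ Kc := by
    have := pow_nonneg (mul_nonneg hlam0 hlam0) (n + 1)
    rw [hKcdef]; positivity
  have hKc1 : Kc < 1 := by
    have h1 : (lam * lam) ^ (n + 1) ≤ (lam * lam) ^ n :=
      pow_le_pow_of_le_one (mul_nonneg hlam0 hlam0) hll1.le (Nat.le_succ n)
    rw [hKcdef]; nlinarith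
  haveI : Nonempty C(X, ℝ) := ⟨0⟩
  have hcontr : ContractingWith (Real.toNNReal Kc) (S^[n + 1]) := by
    constructor
    · rw [← Real.toNNReal_one]
      exact (Real.toNNReal_lt_toNNReal_iff one_pos).2 hKc1
    · refine LipschitzWith.of_dist_le_mul fun φ1 φ2 => ?_
      rw [Real.coe_toNNReal _ hKc0]
      exact hdist n φ1 φ2
  set Φ : C(X, ℝ) := ContractingWith.fixedPoint (S^[n + 1]) hcontr with hΦdef
  have hfixn : S^[n + 1] Φ = Φ := hcontr.fixedPoint_isFixedPt
  have hfix : S Φ = Φ := by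
    have h1 : Function.IsFixedPt (S^[n + 1]) (S Φ) := by
      show S^[n + 1] (S Φ) = S Φ
      rw [← Function.iterate_succ_apply, Function.iterate_succ_apply', hfixn]
    have e1 := hcontr.fixedPoint_unique h1
    have e2 := hcontr.fixedPoint_unique (show Function.IsFixedPt (S^[n + 1]) Φ from hfixn)
    rw [e1, ← e2]
  have hfixfun : ∀ x, T Φ x - T Φ x₀ = Φ x := fun x => by
    have h1 := ContinuousMap.congr_fun hfix x
    rwa [hSapp] at h1
  set ψ : Y → ℝ := Gm μ k ⇑Φ with hψdef
  have hψcont : Continuous ψ := hGcont _ Φ.continuous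
  set c₀ : ℝ := T Φ x₀ with hc₀def
  have hTΦ : ∀ x, Gm ν k' ψ x = Φ x + c₀ := fun x => by
    have h1 := hfixfun x
    rw [hTdef] at h1
    simp only at h1
    rw [hψdef, hc₀def, hTdef]
    simp only
    linarith
  -- the two marginal integrals
  have hint1 : ∀ y : Y, ∫ x, k x y * Real.exp (Φ x) ∂μ = Real.exp (-(ψ y)) := fun y => by
    rw [hψdef]
    exact (exp_neg_Gm μ hm hkX hKmX Φ.continuous y).symm
  have hint2 : ∀ x : X, ∫ y, k x y * Real.exp (ψ y) ∂ν = Real.exp (-(Φ x + c₀)) := fun x => by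
    rw [← hTΦ x]
    exact (exp_neg_Gm ν hm hk'Y hKmY hψcont x).symm
  -- Fubini shows the normalization constant vanishes
  have hkP : Continuous fun p : X × Y => k p.1 p.2 := by
    have h1 : Continuous fun p : X × Y => Real.exp (β * A p) :=
      Real.continuous_exp.comp (continuous_const.mul hAcont)
    exact h1
  have hFcont : Continuous
      (Function.uncurry fun x y => Real.exp (Φ x) * (k x y * Real.exp (ψ y))) := by
    refine Continuous.mul ?_ (Continuous.mul hkP ?_)
    · exact Real.continuous_exp.comp (Φ.continuous.comp continuous_fst)
    · exact Real.continuous_exp.comp (hψcont.comp continuous_snd)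
  have hFint : Integrable
      (Function.uncurry fun x y => Real.exp (Φ x) * (k x y * Real.exp (ψ y))) (μ.prod ν) :=
    cont_integrable (μ.prod ν) hFcont
  have hswap := integral_integral_swap hFint
  have hLHS : ∫ x, (∫ y, Real.exp (Φ x) * (k x y * Real.exp (ψ y)) ∂ν) ∂μ
      = Real.exp (-c₀) := by
    have e1 : ∀ x, ∫ y, Real.exp (Φ x) * (k x y * Real.exp (ψ y)) ∂ν
        = Real.exp (Φ x) * Real.exp (-(Φ x + c₀)) := by
      intro x
      rw [integral_const_mul, hint2 x]
    have e2 : ∀ x, Real.exp (Φ x) * Real.exp (-(Φ x + c₀)) = Real.exp (-c₀) := fun x => by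
      rw [← Real.exp_add]; congr 1; ring
    simp only [e1, e2]
    simp
  have hRHS : ∫ y, (∫ x, Real.exp (Φ x) * (k x y * Real.exp (ψ y)) ∂μ) ∂ν = 1 := by
    have e1 : ∀ y, ∫ x, Real.exp (Φ x) * (k x y * Real.exp (ψ y)) ∂μ
        = Real.exp (ψ y) * Real.exp (-(ψ y)) := by
      intro y
      have h2 : (fun x => Real.exp (Φ x) * (k x y * Real.exp (ψ y))) =
          fun x => Real.exp (ψ y) * (k x y * Real.exp (Φ x)) := by funext x; ring
      rw [h2, integral_const_mul, hint1 y]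
    have e2 : ∀ y, Real.exp (ψ y) * Real.exp (-(ψ y)) = (1:ℝ) := fun y => by
      rw [← Real.exp_add]; simp
    simp only [e1, e2]
    simp
  have hc₀0 : c₀ = 0 := by
    have h1 : Real.exp (-c₀) = 1 := by rw [← hLHS, hswap, hRHS]
    have h2 : -c₀ = 0 := Real.exp_injective (by rw [h1, Real.exp_zero])
    linarith
  -- conclusion
  refine ⟨⇑Φ, ψ, Φ.continuous, hψcont, ?_, ?_, ?_, ?_⟩
  · intro x₁ x₂
    have e1 : Φ x₁ - Φ x₂ = Gm ν k' ψ x₁ - Gm ν k' ψ x₂ := by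
      rw [hTΦ x₁, hTΦ x₂]; ring
    have h1 := hHdiff ψ hψcont x₁ x₂
    have h2 := hHdiff ψ hψcont x₂ x₁
    rw [dist_comm x₂ x₁] at h2
    rw [abs_le]
    constructor <;> linarith [e1, h1, h2]
  · intro y₁ y₂
    have h1 := hGdiff ⇑Φ Φ.continuous y₁ y₂
    have h2 := hGdiff ⇑Φ Φ.continuous y₂ y₁
    rw [dist_comm y₂ y₁] at h2
    rw [hψdef, abs_le]
    constructor <;> linarith
  · intro y
    have h2 : (fun x => Real.exp (β * A (x, y) + Φ x + ψ y)) =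
        fun x => Real.exp (ψ y) * (k x y * Real.exp (Φ x)) := by
      funext x
      rw [hkdef]
      simp only
      rw [← Real.exp_add, ← Real.exp_add]
      congr 1
      ring
    rw [h2, integral_const_mul, hint1 y, ← Real.exp_add]
    simp
  · intro x
    have h2 : (fun y => Real.exp (β * A (x, y) + Φ x + ψ y)) =
        fun y => Real.exp (Φ x) * (k x y * Real.exp (ψ y)) := by
      funext y
      rw [hkdef]
      simp only
      rw [← Real.exp_add, ← Real.exp_add]
      congr 1
      ring
    rw [h2, integral_const_mul, hint2 x, ← Real.exp_add, hc₀0]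
    simp
end

section
/- Let β > 0 and suppose (φ₁, ψ₁) and (φ₂, ψ₂) are two pairs of continuous functions, φ_i : X → ℝ and ψ_i : Y → ℝ, such that for i = 1, 2 one has ∫_X e^{βA(x,y)+φ_i(x)+ψ_i(y)} dμ(x) = 1 for every y ∈ Y and ∫_Y e^{βA(x,y)+φ_i(x)+ψ_i(y)} dν(y) = 1 for every x ∈ X. Then there is a constant d ∈ ℝ such that φ₂ = φ₁ + d and ψ₂ = ψ₁ − d. -/
open MeasureTheory Filter

/-- A continuous function on a compact space is integrable w.r.t. a finite measure. -/
theorem my_cont_integrable {Z : Type*} [MetricSpace Z] [MeasurableSpace Z] [BorelSpace Z]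
    [CompactSpace Z] (μ : Measure Z) [IsFiniteMeasure μ] {h : Z → ℝ} (hc : Continuous h) :
    Integrable h μ :=
  hc.integrable_of_hasCompactSupport
    (IsCompact.of_isClosed_subset isCompact_univ (isClosed_tsupport _) (Set.subset_univ _))

/-- A nonnegative continuous function with vanishing integral against a fully supported
finite measure on a compact space vanishes identically. -/
theorem my_zero_of_integral {Z : Type*} [MetricSpace Z] [MeasurableSpace Z] [BorelSpace Z]
    [CompactSpace Z] (μ : Measure Z) [IsFiniteMeasure μ] [μ.IsOpenPosMeasure]
    {h : Z → ℝ} (hc : Continuous h) (hn : ∀ z, 0 ≤ h z) (hi : ∫ z, h z ∂μ = 0) :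
    ∀ z, h z = 0 := by
  have hint : Integrable h μ := my_cont_integrable μ hc
  have hae : h =ᵐ[μ] 0 :=
    (integral_eq_zero_iff_of_nonneg (fun z => hn z) hint).mp hi
  have := (Continuous.ae_eq_iff_eq μ hc continuous_const).mp hae
  exact fun z => congrFun this z

theorem stmt1
    {X Y : Type*}
    [MetricSpace X] [CompactSpace X] [MeasurableSpace X] [BorelSpace X]
    [MetricSpace Y] [CompactSpace Y] [MeasurableSpace Y] [BorelSpace Y]
    (μ : Measure X) [IsProbabilityMeasure μ] [μ.IsOpenPosMeasure]
    (ν : Measure Y) [IsProbabilityMeasure ν] [ν.IsOpenPosMeasure]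
    (c : X × Y → ℝ) (L : ℝ)
    (hc : ∀ p q : X × Y, |c p - c q| ≤ L * (dist p.1 q.1 + dist p.2 q.2))
    (A : X × Y → ℝ) (hA : A = fun p => - c p)
    (β : ℝ) (hβ : 0 < β)
    (φ₁ φ₂ : X → ℝ) (ψ₁ ψ₂ : Y → ℝ)
    (hφ₁ : Continuous φ₁) (hφ₂ : Continuous φ₂)
    (hψ₁ : Continuous ψ₁) (hψ₂ : Continuous ψ₂)
    (h1₁ : ∀ y : Y, ∫ x, Real.exp (β * A (x, y) + φ₁ x + ψ₁ y) ∂μ = 1)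
    (h2₁ : ∀ x : X, ∫ y, Real.exp (β * A (x, y) + φ₁ x + ψ₁ y) ∂ν = 1)
    (h1₂ : ∀ y : Y, ∫ x, Real.exp (β * A (x, y) + φ₂ x + ψ₂ y) ∂μ = 1)
    (h2₂ : ∀ x : X, ∫ y, Real.exp (β * A (x, y) + φ₂ x + ψ₂ y) ∂ν = 1) :
    ∃ d : ℝ, φ₂ = (fun x => φ₁ x + d) ∧ ψ₂ = (fun y => ψ₁ y - d) := by
  -- continuity of slices of A
  have hcX : ∀ y : Y, Continuous fun x => A (x, y) := by
    intro y
    rw [hA]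
    refine Continuous.neg (LipschitzWith.continuous (K := Real.toNNReal L) ?_)
    refine LipschitzWith.of_dist_le_mul fun a b => ?_
    have := hc (a, y) (b, y)
    simp only [dist_self, add_zero] at this
    calc dist (c (a, y)) (c (b, y)) = |c (a, y) - c (b, y)| := Real.dist_eq _ _
      _ ≤ L * dist a b := this
      _ ≤ Real.toNNReal L * dist a b := by
          gcongr
          exact Real.le_coe_toNNReal L
  have hcY : ∀ x : X, Continuous fun y => A (x, y) := by
    intro x
    rw [hA]
    refine Continuous.neg (LipschitzWith.continuous (K := Real.toNNReal L) ?_)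
    refine LipschitzWith.of_dist_le_mul fun a b => ?_
    have := hc (x, a) (x, b)
    simp only [dist_self, zero_add] at this
    calc dist (c (x, a)) (c (x, b)) = |c (x, a) - c (x, b)| := Real.dist_eq _ _
      _ ≤ L * dist a b := this
      _ ≤ Real.toNNReal L * dist a b := by
          gcongr
          exact Real.le_coe_toNNReal L
  have hXne : Nonempty X := by
    rcases isEmpty_or_nonempty X with h | h
    · exfalso
      have := measure_univ (μ := μ)
      simp [Set.univ_eq_empty_iff.mpr h] at this
    · exact h
  have hYne : Nonempty Y := by
    rcases isEmpty_or_nonempty Y with h | h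
    · exfalso
      have := measure_univ (μ := ν)
      simp [Set.univ_eq_empty_iff.mpr h] at this
    · exact h
  -- f = φ₂ - φ₁, g = ψ₂ - ψ₁, d = max f at x₀
  set f : X → ℝ := fun x => φ₂ x - φ₁ x with hf
  set g : Y → ℝ := fun y => ψ₂ y - ψ₁ y with hg
  have hfc : Continuous f := hφ₂.sub hφ₁
  have hgc : Continuous g := hψ₂.sub hψ₁
  obtain ⟨x₀, -, hx₀⟩ :=
    isCompact_univ.exists_isMaxOn Set.univ_nonempty (hfc.continuousOn (s := Set.univ))
  set d : ℝ := f x₀ with hd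
  have hfd : ∀ x, f x ≤ d := fun x => hx₀ (Set.mem_univ x)
  -- the reference kernel
  set E : X → Y → ℝ := fun x y => Real.exp (β * A (x, y) + φ₁ x + ψ₁ y) with hE
  have hEpos : ∀ x y, 0 < E x y := fun x y => Real.exp_pos _
  have hEcX : ∀ y, Continuous fun x => E x y := fun y =>
    (((continuous_const.mul (hcX y)).add hφ₁).add continuous_const).rexp
  have hEcY : ∀ x, Continuous fun y => E x y := fun x =>
    (((continuous_const.mul (hcY x)).add continuous_const).add hψ₁).rexp
  -- rewrite the second pair of conditions using E, f, g
  have key : ∀ x y, Real.exp (β * A (x, y) + φ₂ x + ψ₂ y) = E x y * Real.exp (f x + g y) := by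
    intro x y
    rw [hE, ← Real.exp_add]
    congr 1
    simp only [hf, hg]
    ring
  have h1₂' : ∀ y, ∫ x, E x y * Real.exp (f x + g y) ∂μ = 1 := by
    intro y
    rw [← h1₂ y]
    exact integral_congr_ae (Filter.Eventually.of_forall fun x => (key x y).symm)
  have h2₂' : ∀ x, ∫ y, E x y * Real.exp (f x + g y) ∂ν = 1 := by
    intro x
    rw [← h2₂ x]
    exact integral_congr_ae (Filter.Eventually.of_forall fun y => (key x y).symm)
  -- Step 1: for all y, 1 ≤ exp (d + g y)
  have step1 : ∀ y, (1 : ℝ) ≤ Real.exp (d + g y) := by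
    intro y
    have hle : ∫ x, E x y * Real.exp (f x + g y) ∂μ
        ≤ ∫ x, E x y * Real.exp (d + g y) ∂μ := by
      refine integral_mono ?_ ?_ ?_
      · exact my_cont_integrable μ ((hEcX y).mul ((hfc.add continuous_const).rexp))
      · exact my_cont_integrable μ ((hEcX y).mul continuous_const)
      · intro x
        have := Real.exp_le_exp.mpr (by linarith [hfd x] : f x + g y ≤ d + g y)
        exact mul_le_mul_of_nonneg_left this (hEpos x y).le
    rw [h1₂' y] at hle
    calc (1 : ℝ) ≤ ∫ x, E x y * Real.exp (d + g y) ∂μ := hle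
      _ = (∫ x, E x y ∂μ) * Real.exp (d + g y) := by rw [integral_mul_const]
      _ = Real.exp (d + g y) := by rw [hE] at *; rw [h1₁ y, one_mul]
  -- Step 2: g ≡ -d
  have step2 : ∀ y, g y = -d := by
    have hzero : ∀ y, E x₀ y * (Real.exp (d + g y) - 1) = 0 := by
      refine my_zero_of_integral ν ?_ ?_ ?_
      · exact (hEcY x₀).mul (((continuous_const.add hgc).rexp).sub continuous_const)
      · intro y
        exact mul_nonneg (hEpos x₀ y).le (by linarith [step1 y])
      · have hint1 : Integrable (fun y => E x₀ y * Real.exp (d + g y)) ν :=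
          my_cont_integrable ν ((hEcY x₀).mul ((continuous_const.add hgc).rexp))
        have hint2 : Integrable (fun y => E x₀ y) ν := my_cont_integrable ν (hEcY x₀)
        have hsplit : ∀ y, E x₀ y * (Real.exp (d + g y) - 1)
            = E x₀ y * Real.exp (d + g y) - E x₀ y := fun y => by ring
        calc ∫ y, E x₀ y * (Real.exp (d + g y) - 1) ∂ν
            = ∫ y, (E x₀ y * Real.exp (d + g y) - E x₀ y) ∂ν := by
              exact integral_congr_ae (Filter.Eventually.of_forall fun y => hsplit y)
          _ = (∫ y, E x₀ y * Real.exp (d + g y) ∂ν) - ∫ y, E x₀ y ∂ν :=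
              integral_sub hint1 hint2
          _ = 0 := by
              have e1 : ∫ y, E x₀ y * Real.exp (d + g y) ∂ν = 1 := by
                rw [hd]; exact h2₂' x₀
              have e2 : ∫ y, E x₀ y ∂ν = 1 := by rw [hE]; exact h2₁ x₀
              rw [e1, e2, sub_self]
    intro y
    have h := hzero y
    have hEne : E x₀ y ≠ 0 := (hEpos x₀ y).ne'
    have : Real.exp (d + g y) - 1 = 0 := by
      rcases mul_eq_zero.mp h with h' | h'
      · exact absurd h' hEne
      · exact h'
    have h1 : Real.exp (d + g y) = Real.exp 0 := by rw [Real.exp_zero]; linarith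
    have := Real.exp_injective h1
    linarith
  -- Step 3: f ≡ d
  have step3 : ∀ x, f x = d := by
    obtain ⟨y⟩ := hYne
    have hzero : ∀ x, E x y * (1 - Real.exp (f x - d)) = 0 := by
      refine my_zero_of_integral μ ?_ ?_ ?_
      · exact (hEcX y).mul (continuous_const.sub ((hfc.sub continuous_const).rexp))
      · intro x
        have : Real.exp (f x - d) ≤ 1 := by
          rw [← Real.exp_zero]
          exact Real.exp_le_exp.mpr (by linarith [hfd x])
        exact mul_nonneg (hEpos x y).le (by linarith)
      · have hint1 : Integrable (fun x => E x y) μ := my_cont_integrable μ (hEcX y)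
        have hint2 : Integrable (fun x => E x y * Real.exp (f x - d)) μ :=
          my_cont_integrable μ ((hEcX y).mul ((hfc.sub continuous_const).rexp))
        calc ∫ x, E x y * (1 - Real.exp (f x - d)) ∂μ
            = ∫ x, (E x y - E x y * Real.exp (f x - d)) ∂μ := by
              exact integral_congr_ae (Filter.Eventually.of_forall fun x => by ring)
          _ = (∫ x, E x y ∂μ) - ∫ x, E x y * Real.exp (f x - d) ∂μ :=
              integral_sub hint1 hint2
          _ = 0 := by
              have e1 : ∫ x, E x y ∂μ = 1 := by rw [hE]; exact h1₁ y
              have e2 : ∫ x, E x y * Real.exp (f x - d) ∂μ = 1 := by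
                rw [← h1₂' y]
                refine integral_congr_ae (Filter.Eventually.of_forall fun x => ?_)
                rw [step2 y]
                ring_nf
              rw [e1, e2, sub_self]
    intro x
    have h := hzero x
    have hEne : E x y ≠ 0 := (hEpos x y).ne'
    have : 1 - Real.exp (f x - d) = 0 := by
      rcases mul_eq_zero.mp h with h' | h'
      · exact absurd h' hEne
      · exact h'
    have h1 : Real.exp (f x - d) = Real.exp 0 := by rw [Real.exp_zero]; linarith
    have := Real.exp_injective h1
    linarith
  refine ⟨d, ?_, ?_⟩
  · funext x
    have := step3 x
    simp only [hf] at this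
    linarith
  · funext y
    have := step2 y
    simp only [hg] at this
    linarith
end

section
/- Let β > 0, let (φ_β, ψ_β) be a pair of β-potentials, and let π_β be the probability measure with density e^{βA+φ_β+ψ_β} with respect to μ×ν. Then for every π ∈ Π(μ,ν) one has ∫ βA dπ + H(π) ≤ −∫ φ_β dμ − ∫ ψ_β dν, with equality for π = π_β; consequently P(βA) = ∫ βA dπ_β + H(π_β) = −∫ φ_β dμ − ∫ ψ_β dν. -/
open MeasureTheory Filter

open Classical in
noncomputable def negKL {X Y : Type*} [MeasurableSpace X] [MeasurableSpace Y]
    (μ : Measure X) (ν : Measure Y) (π : Measure (X × Y)) : EReal :=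
  if π ≪ μ.prod ν ∧ Integrable (llr π (μ.prod ν)) π
  then ((- ∫ p, llr π (μ.prod ν) p ∂π : ℝ) : EReal)
  else ⊥

def IsPlan {X Y : Type*} [MeasurableSpace X] [MeasurableSpace Y]
    (μ : Measure X) (ν : Measure Y) (π : Measure (X × Y)) : Prop :=
  IsProbabilityMeasure π ∧ π.map Prod.fst = μ ∧ π.map Prod.snd = ν

noncomputable def pressure {X Y : Type*} [MeasurableSpace X] [MeasurableSpace Y]
    (μ : Measure X) (ν : Measure Y) (B : X × Y → ℝ) : EReal :=
  ⨆ π : {π : Measure (X × Y) // IsPlan μ ν π},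
    ((∫ p, B p ∂(π.1) : ℝ) : EReal) + negKL μ ν π.1

noncomputable def transportCost {X Y : Type*} [MeasurableSpace X] [MeasurableSpace Y]
    (μ : Measure X) (ν : Measure Y) (c : X × Y → ℝ) : ℝ :=
  ⨅ π : {π : Measure (X × Y) // IsPlan μ ν π}, ∫ p, c p ∂(π.1)

noncomputable def maxVal {X Y : Type*} [MeasurableSpace X] [MeasurableSpace Y]
    (μ : Measure X) (ν : Measure Y) (A : X × Y → ℝ) : ℝ :=
  ⨆ π : {π : Measure (X × Y) // IsPlan μ ν π}, ∫ p, A p ∂(π.1)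

noncomputable def Hmax {X Y : Type*} [MeasurableSpace X] [MeasurableSpace Y]
    (μ : Measure X) (ν : Measure Y) (A : X × Y → ℝ) : EReal :=
  ⨆ π : {π : Measure (X × Y) // IsPlan μ ν π ∧ ∫ p, A p ∂π = maxVal μ ν A},
    negKL μ ν π.1

open MeasureTheory
open scoped ENNReal

lemma cont_integrable_s3 {Z : Type*} [TopologicalSpace Z] [CompactSpace Z] [MeasurableSpace Z]
    [OpensMeasurableSpace Z] [T2Space Z] (μ : Measure Z) [IsFiniteMeasure μ] {f : Z → ℝ}
    (hf : Continuous f) : Integrable f μ :=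
  hf.integrable_of_hasCompactSupport (HasCompactSupport.of_compactSpace f)

lemma kl_nonneg {Z : Type*} [MeasurableSpace Z] (π τ : Measure Z)
    [IsProbabilityMeasure π] [IsProbabilityMeasure τ]
    (hac : π ≪ τ) (hint : Integrable (llr π τ) π) : 0 ≤ ∫ z, llr π τ z ∂π := by
  set g : Z → ℝ := fun z => (π.rnDeriv τ z).toReal with hg
  have hgm : Measurable g := (Measure.measurable_rnDeriv π τ).ennreal_toReal
  have hpos : ∀ᵐ z ∂π, 0 < π.rnDeriv τ z := Measure.rnDeriv_pos hac
  have hlt : ∀ᵐ z ∂π, π.rnDeriv τ z < ⊤ := hac.ae_le (Measure.rnDeriv_lt_top π τ)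
  have hgpos : ∀ᵐ z ∂π, 0 < g z := by
    filter_upwards [hpos, hlt] with z h1 h2
    exact ENNReal.toReal_pos h1.ne' h2.ne
  have hlint : ∫⁻ z, ENNReal.ofReal (g z)⁻¹ ∂π ≤ 1 := by
    have h1 : ∫⁻ z, ENNReal.ofReal (g z)⁻¹ ∂π
        = ∫⁻ z, π.rnDeriv τ z * ENNReal.ofReal (g z)⁻¹ ∂τ :=
      (lintegral_rnDeriv_mul hac
        (ENNReal.measurable_ofReal.comp hgm.inv).aemeasurable).symm
    rw [h1]
    calc ∫⁻ z, π.rnDeriv τ z * ENNReal.ofReal (g z)⁻¹ ∂τ ≤ ∫⁻ _, 1 ∂τ := by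
          refine lintegral_mono_ae ?_
          filter_upwards [Measure.rnDeriv_lt_top π τ] with z h2
          rcases eq_or_ne (π.rnDeriv τ z) 0 with h0 | h0
          · simp [h0]
          · have : ENNReal.ofReal (g z)⁻¹ = (π.rnDeriv τ z)⁻¹ := by
              rw [hg, ENNReal.ofReal_inv_of_pos (ENNReal.toReal_pos h0 h2.ne),
                ENNReal.ofReal_toReal h2.ne]
            rw [this, ENNReal.mul_inv_cancel h0 h2.ne]
      _ = 1 := by simp
  have hinv_int : Integrable (fun z => (g z)⁻¹) π := by
    refine ⟨(hgm.inv).aestronglyMeasurable, ?_⟩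
    rw [hasFiniteIntegral_iff_ofReal
      (Filter.Eventually.of_forall fun z => inv_nonneg.mpr ENNReal.toReal_nonneg)]
    exact lt_of_le_of_lt hlint ENNReal.one_lt_top
  have hinv_le : ∫ z, (g z)⁻¹ ∂π ≤ 1 := by
    rw [integral_eq_lintegral_of_nonneg_ae
      (Filter.Eventually.of_forall fun z => inv_nonneg.mpr ENNReal.toReal_nonneg)
      (hgm.inv).aestronglyMeasurable]
    calc (∫⁻ z, ENNReal.ofReal (g z)⁻¹ ∂π).toReal ≤ (1 : ℝ≥0∞).toReal :=
          ENNReal.toReal_mono ENNReal.one_ne_top hlint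
      _ = 1 := by simp
  have hpt : ∀ᵐ z ∂π, (1 : ℝ) - (g z)⁻¹ ≤ llr π τ z := by
    filter_upwards [hgpos] with z h1
    have h2 : Real.log (g z)⁻¹ ≤ (g z)⁻¹ - 1 :=
      Real.log_le_sub_one_of_pos (inv_pos.mpr h1)
    rw [Real.log_inv] at h2
    have : llr π τ z = Real.log (g z) := rfl
    linarith [this ▸ h2]
  have := integral_mono_ae ((integrable_const (1:ℝ)).sub hinv_int) hint hpt
  simp only [Pi.sub_apply] at this
  rw [integral_sub (integrable_const _) hinv_int] at this
  simp only [integral_const, measure_univ, probReal_univ, ENNReal.toReal_one, smul_eq_mul, one_mul] at this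
  linarith

theorem stmt3
    {X Y : Type*}
    [MetricSpace X] [CompactSpace X] [MeasurableSpace X] [BorelSpace X]
    [MetricSpace Y] [CompactSpace Y] [MeasurableSpace Y] [BorelSpace Y]
    (μ : Measure X) [IsProbabilityMeasure μ] [μ.IsOpenPosMeasure]
    (ν : Measure Y) [IsProbabilityMeasure ν] [ν.IsOpenPosMeasure]
    (c : X × Y → ℝ) (L : ℝ)
    (hc : ∀ p q : X × Y, |c p - c q| ≤ L * (dist p.1 q.1 + dist p.2 q.2))
    (A : X × Y → ℝ) (hA : A = fun p => - c p)
    (β : ℝ) (hβ : 0 < β)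
    (φ : X → ℝ) (ψ : Y → ℝ) (hφ : Continuous φ) (hψ : Continuous ψ)
    (h1 : ∀ y : Y, ∫ x, Real.exp (β * A (x, y) + φ x + ψ y) ∂μ = 1)
    (h2 : ∀ x : X, ∫ y, Real.exp (β * A (x, y) + φ x + ψ y) ∂ν = 1)
    (πβ : Measure (X × Y))
    (hπβ : πβ = (μ.prod ν).withDensity
      (fun p => ENNReal.ofReal (Real.exp (β * A p + φ p.1 + ψ p.2)))) :
    (∀ π : Measure (X × Y), IsPlan μ ν π →
      ((∫ p, β * A p ∂π : ℝ) : EReal) + negKL μ ν π ≤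
        ((- ∫ x, φ x ∂μ - ∫ y, ψ y ∂ν : ℝ) : EReal)) ∧
    ((∫ p, β * A p ∂πβ : ℝ) : EReal) + negKL μ ν πβ =
      ((- ∫ x, φ x ∂μ - ∫ y, ψ y ∂ν : ℝ) : EReal) ∧
    pressure μ ν (fun p => β * A p) =
      ((- ∫ x, φ x ∂μ - ∫ y, ψ y ∂ν : ℝ) : EReal) := by
  have hρprob : IsProbabilityMeasure (μ.prod ν) := by infer_instance
  -- continuity of c and A
  have hcc : Continuous c := by
    rw [Metric.continuous_iff]
    intro p ε hε
    rcases le_or_gt L 0 with hL | hL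
    · refine ⟨1, one_pos, fun q hq => ?_⟩
      have h0 := hc q p
      have h1 : L * (dist q.1 p.1 + dist q.2 p.2) ≤ 0 :=
        mul_nonpos_of_nonpos_of_nonneg hL (by positivity)
      rw [Real.dist_eq]
      have : |c q - c p| = 0 := le_antisymm (h0.trans h1) (abs_nonneg _)
      linarith [hε]
    · refine ⟨ε / (2 * L), by positivity, fun q hq => ?_⟩
      rw [Real.dist_eq]
      refine lt_of_le_of_lt (hc q p) ?_
      have h1 : dist q.1 p.1 ≤ dist q p := le_max_left _ _
      have h2 : dist q.2 p.2 ≤ dist q p := le_max_right _ _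
      have h3 : dist q.1 p.1 + dist q.2 p.2 < 2 * (ε / (2 * L)) := by
        rw [Prod.dist_eq] at hq
        simp only [sup_lt_iff] at hq
        linarith [hq.1, hq.2]
      calc L * (dist q.1 p.1 + dist q.2 p.2) < L * (2 * (ε / (2 * L))) :=
            mul_lt_mul_of_pos_left h3 hL
        _ = ε := by field_simp
  have hAc : Continuous A := by rw [hA]; exact hcc.neg
  have hfc : Continuous (fun p : X × Y => β * A p + φ p.1 + ψ p.2) :=
    ((continuous_const.mul hAc).add (hφ.comp continuous_fst)).add (hψ.comp continuous_snd)
  set f : X × Y → ℝ := fun p => β * A p + φ p.1 + ψ p.2 with hfdef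
  have hef : Continuous fun p => Real.exp (f p) := Real.continuous_exp.comp hfc
  have hef_int : Integrable (fun p => Real.exp (f p)) (μ.prod ν) := cont_integrable_s3 _ hef
  have hefy_int : ∀ x : X, Integrable (fun y => Real.exp (f (x, y))) ν := fun x =>
    cont_integrable_s3 _ (hef.comp (Continuous.prodMk_right x))
  have hefx_int : ∀ y : Y, Integrable (fun x => Real.exp (f (x, y))) μ := fun y =>
    cont_integrable_s3 _ (hef.comp (Continuous.prodMk_left y))
  have hefy : ∀ x : X, ∫⁻ y, ENNReal.ofReal (Real.exp (f (x, y))) ∂ν = 1 := by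
    intro x
    rw [← ofReal_integral_eq_lintegral_ofReal (hefy_int x)
      (Filter.Eventually.of_forall fun y => (Real.exp_pos _).le)]
    have h2' := h2 x
    simp only [hfdef]
    rw [h2']
    simp
  have hefx : ∀ y : Y, ∫⁻ x, ENNReal.ofReal (Real.exp (f (x, y))) ∂μ = 1 := by
    intro y
    rw [← ofReal_integral_eq_lintegral_ofReal (hefx_int y)
      (Filter.Eventually.of_forall fun x => (Real.exp_pos _).le)]
    have h1' := h1 y
    simp only [hfdef]
    rw [h1']
    simp
  have hZ : ∫ p, Real.exp (f p) ∂(μ.prod ν) = 1 := by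
    rw [MeasureTheory.integral_prod _ hef_int]
    have hx : ∀ x : X, ∫ y, Real.exp (f (x, y)) ∂ν = 1 := fun x => by
      simpa [hfdef] using h2 x
    simp [hx]
  have hπb : πβ = (μ.prod ν).tilted f := by
    rw [hπβ, Measure.tilted, hZ]
    simp [hfdef]
  have hDmeas : Measurable (fun p : X × Y => ENNReal.ofReal (Real.exp (f p))) :=
    ENNReal.measurable_ofReal.comp hef.measurable
  have hπbw : πβ = (μ.prod ν).withDensity (fun p => ENNReal.ofReal (Real.exp (f p))) := by
    rw [hπβ]
  haveI hprobβ : IsProbabilityMeasure πβ := by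
    rw [hπb]; exact isProbabilityMeasure_tilted hef_int
  -- marginals of πβ
  have hmap1 : πβ.map Prod.fst = μ := by
    ext s hs
    rw [Measure.map_apply measurable_fst hs, hπbw]
    have hpre : Prod.fst ⁻¹' s = s ×ˢ (Set.univ : Set Y) := (Set.prod_univ).symm
    rw [hpre, withDensity_apply _ (hs.prod MeasurableSet.univ),
      ← Measure.restrict_prod_eq_prod_univ,
      MeasureTheory.lintegral_prod _ hDmeas.aemeasurable]
    simp only [hefy]
    simp
  have hmap2 : πβ.map Prod.snd = ν := by
    ext s hs
    rw [Measure.map_apply measurable_snd hs, hπbw]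
    have hpre : Prod.snd ⁻¹' s = (Set.univ : Set X) ×ˢ s := (Set.univ_prod).symm
    rw [hpre, withDensity_apply _ (MeasurableSet.univ.prod hs),
      ← Measure.prod_restrict, Measure.restrict_univ,
      MeasureTheory.lintegral_prod_symm _ hDmeas.aemeasurable]
    simp only [hefx]
    simp
  have hplanβ : IsPlan μ ν πβ := ⟨hprobβ, hmap1, hmap2⟩
  -- splitting of ∫ f for any plan
  have hsplit : ∀ π : Measure (X × Y), IsPlan μ ν π →
      ∫ p, f p ∂π = ∫ p, β * A p ∂π + ∫ x, φ x ∂μ + ∫ y, ψ y ∂ν := by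
    intro π hπ
    haveI := hπ.1
    have hφi : Integrable (fun p : X × Y => φ p.1) π := cont_integrable_s3 _ (hφ.comp continuous_fst)
    have hψi : Integrable (fun p : X × Y => ψ p.2) π := cont_integrable_s3 _ (hψ.comp continuous_snd)
    have hAi : Integrable (fun p : X × Y => β * A p) π :=
      cont_integrable_s3 _ (continuous_const.mul hAc)
    have e1 : ∫ p, f p ∂π = ∫ p, β * A p ∂π + ∫ p, φ p.1 ∂π + ∫ p, ψ p.2 ∂π := by
      have hAφ : Integrable (fun p : X × Y => β * A p + φ p.1) π := hAi.add hφi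
      rw [hfdef]
      rw [integral_add hAφ hψi]
      congr 1
      exact integral_add hAi hφi
    rw [e1]
    congr 1
    · congr 1
      rw [← hπ.2.1, integral_map measurable_fst.aemeasurable]
      exact hφ.aestronglyMeasurable
    · rw [← hπ.2.2, integral_map measurable_snd.aemeasurable]
      exact hψ.aestronglyMeasurable
  -- key inequality
  have key : ∀ π : Measure (X × Y), IsPlan μ ν π → π ≪ μ.prod ν →
      Integrable (llr π (μ.prod ν)) π →
      ∫ p, f p ∂π ≤ ∫ p, llr π (μ.prod ν) p ∂π := by
    intro π hπ hac hint
    haveI := hπ.1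
    haveI : IsProbabilityMeasure ((μ.prod ν).tilted f) := isProbabilityMeasure_tilted hef_int
    have hfi : Integrable f π := cont_integrable_s3 _ hfc
    have h0 : 0 ≤ ∫ p, llr π ((μ.prod ν).tilted f) p ∂π :=
      kl_nonneg _ _ (hac.trans (absolutelyContinuous_tilted hef_int))
        (integrable_llr_tilted_right hac hfi hint hef_int)
    rw [integral_llr_tilted_right hac hfi hef_int hint, hZ, Real.log_one, add_zero] at h0
    linarith
  -- part 1
  have part1 : ∀ π : Measure (X × Y), IsPlan μ ν π →
      ((∫ p, β * A p ∂π : ℝ) : EReal) + negKL μ ν π ≤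
        ((- ∫ x, φ x ∂μ - ∫ y, ψ y ∂ν : ℝ) : EReal) := by
    intro π hπ
    by_cases hcase : π ≪ μ.prod ν ∧ Integrable (llr π (μ.prod ν)) π
    · rw [negKL, if_pos hcase, ← EReal.coe_add, EReal.coe_le_coe_iff]
      have h3 := key π hπ hcase.1 hcase.2
      have h4 := hsplit π hπ
      linarith
    · rw [negKL, if_neg hcase, EReal.add_bot]
      exact bot_le
  -- equality for πβ
  have hacβ : πβ ≪ μ.prod ν := by
    rw [hπbw]; exact withDensity_absolutelyContinuous _ _
  have hllrρ : llr πβ (μ.prod ν) =ᵐ[μ.prod ν] f := by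
    have h5 : ((μ.prod ν).withDensity
        (fun p => ENNReal.ofReal (Real.exp (f p)))).rnDeriv (μ.prod ν)
        =ᵐ[μ.prod ν] (fun p => ENNReal.ofReal (Real.exp (f p))) :=
      Measure.rnDeriv_withDensity (μ.prod ν) hDmeas
    rw [← hπbw] at h5
    filter_upwards [h5] with p hp
    rw [llr, hp, ENNReal.toReal_ofReal (Real.exp_pos _).le, Real.log_exp]
  have hllrβ : llr πβ (μ.prod ν) =ᵐ[πβ] f := hacβ.ae_le hllrρ
  have hintβ : Integrable (llr πβ (μ.prod ν)) πβ :=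
    (integrable_congr hllrβ).mpr (cont_integrable_s3 _ hfc)
  have hnegKLβ : negKL μ ν πβ = ((- ∫ p, f p ∂πβ : ℝ) : EReal) := by
    rw [negKL, if_pos ⟨hacβ, hintβ⟩]
    congr 2
    exact integral_congr_ae hllrβ
  have eqβ : ((∫ p, β * A p ∂πβ : ℝ) : EReal) + negKL μ ν πβ =
      ((- ∫ x, φ x ∂μ - ∫ y, ψ y ∂ν : ℝ) : EReal) := by
    rw [hnegKLβ, ← EReal.coe_add]
    have h4 := hsplit πβ hplanβ
    norm_cast
    linarith
  refine ⟨part1, eqβ, ?_⟩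
  rw [pressure]
  apply le_antisymm
  · refine iSup_le fun π => ?_
    simpa using part1 π.1 π.2
  · refine le_iSup_of_le ⟨πβ, hplanβ⟩ (le_of_eq ?_)
    simpa using eqβ.symm
end

section
/- Let (β_n) be a sequence of positive reals with β_n → +∞, and for each n let (φ_n, ψ_n) be a pair of β_n-potentials. Suppose φ_n/β_n converges uniformly to φ : X → ℝ and ψ_n/β_n converges uniformly to ψ : Y → ℝ. Then sup_{x∈X} [A(x,y) + φ(x) + ψ(y)] = 0 for every y ∈ Y and sup_{y∈Y} [A(x,y) + φ(x) + ψ(y)] = 0 for every x ∈ X; equivalently, ψ(y) = inf_{x∈X} [c(x,y) − φ(x)] for all y and φ(x) = inf_{y∈Y} [c(x,y) − ψ(y)] for all x, and in particular φ(x) + ψ(y) ≤ c(x,y) for all (x,y). -/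
open MeasureTheory Filter Topology

lemma key_lap {X : Type*} [MetricSpace X] [CompactSpace X] [MeasurableSpace X] [BorelSpace X]
    (μ : Measure X) [IsProbabilityMeasure μ] [μ.IsOpenPosMeasure]
    (βs : ℕ → ℝ) (hβpos : ∀ n, 0 < βs n) (hβtop : Tendsto βs atTop atTop)
    (gs : ℕ → X → ℝ) (hgs : ∀ n, Continuous (gs n))
    (hint : ∀ n, ∫ x, Real.exp (βs n * gs n x) ∂μ = 1)
    (g : X → ℝ) (hconv : TendstoUniformly gs g atTop) :
    (⨆ x, g x) = 0 := by
  have hX : Nonempty X := by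
    by_contra h
    rw [not_nonempty_iff] at h
    have h1 : μ Set.univ = 1 := measure_univ
    rw [Set.univ_eq_empty_iff.2 h] at h1
    simp at h1
  have hg : Continuous g := hconv.continuous (Eventually.of_forall hgs).frequently
  obtain ⟨x0, -, hx0⟩ := isCompact_univ.exists_isMaxOn Set.univ_nonempty hg.continuousOn
  have hx0' : ∀ x : X, g x ≤ g x0 := fun x => hx0 (Set.mem_univ x)
  have hintg : ∀ n, Integrable (fun x => Real.exp (βs n * gs n x)) μ :=
    fun n => (Real.continuous_exp.comp ((continuous_const.mul (hgs n)))).integrable_of_hasCompactSupport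
      (HasCompactSupport.of_compactSpace _)
  have hsup : (⨆ x, g x) = g x0 :=
    le_antisymm (ciSup_le hx0') (le_ciSup ⟨g x0, Set.forall_mem_range.2 hx0'⟩ x0)
  rw [hsup]
  rcases lt_trichotomy (g x0) 0 with hneg | h0 | hpos
  · exfalso
    -- eventually gs n x ≤ g x0 / 2 < 0
    have hε : (0:ℝ) < -(g x0) / 2 := by linarith
    obtain ⟨n, hn⟩ := (Metric.tendstoUniformly_iff.1 hconv (-(g x0)/2) hε).exists
    have hle : ∀ x, gs n x ≤ g x0 / 2 := by
      intro x
      have := hn x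
      rw [Real.dist_eq, abs_lt] at this
      have := hx0' x
      linarith
    have hb : ∫ x, Real.exp (βs n * gs n x) ∂μ ≤ Real.exp (βs n * (g x0 / 2)) := by
      calc ∫ x, Real.exp (βs n * gs n x) ∂μ ≤ ∫ _x, Real.exp (βs n * (g x0 / 2)) ∂μ := by
            apply integral_mono (hintg n) (integrable_const _)
            intro x
            exact Real.exp_le_exp.2 (mul_le_mul_of_nonneg_left (hle x) (hβpos n).le)
        _ = Real.exp (βs n * (g x0 / 2)) := by simp
    rw [hint n] at hb
    have : Real.exp (βs n * (g x0 / 2)) < 1 := by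
      rw [Real.exp_lt_one_iff]
      have := hβpos n
      nlinarith
    linarith
  · exact h0
  · exfalso
    set U : Set X := {x | g x0 / 2 < g x} with hU
    have hUopen : IsOpen U := isOpen_lt continuous_const hg
    have hUne : U.Nonempty := ⟨x0, by simp [hU]; linarith⟩
    have hμU : 0 < μ U := hUopen.measure_pos μ hUne
    have hμUfin : μ U ≠ ⊤ := measure_ne_top μ U
    set m := (μ U).toReal with hm
    have hmpos : 0 < m := ENNReal.toReal_pos hμU.ne' hμUfin
    -- eventual conditions
    have hev1 : ∀ᶠ n in atTop, ∀ x, dist (g x) (gs n x) < g x0 / 4 :=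
      Metric.tendstoUniformly_iff.1 hconv (g x0 / 4) (by linarith)
    have hev2 : ∀ᶠ n in atTop, Real.log (2 / m) ≤ βs n * (g x0 / 4) := by
      have : Tendsto (fun n => βs n * (g x0 / 4)) atTop atTop :=
        hβtop.atTop_mul_const (by linarith)
      exact this.eventually_ge_atTop _
    obtain ⟨n, hn1, hn2⟩ := (hev1.and hev2).exists
    have hgeU : ∀ x ∈ U, g x0 / 4 ≤ gs n x := by
      intro x hx
      have := hn1 x
      rw [Real.dist_eq, abs_lt] at this
      have hx' : g x0 / 2 < g x := hx
      linarith
    have hexp : (2 : ℝ) / m ≤ Real.exp (βs n * (g x0 / 4)) := by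
      calc (2:ℝ)/m = Real.exp (Real.log (2/m)) := by
            rw [Real.exp_log (by positivity)]
        _ ≤ _ := Real.exp_le_exp.2 hn2
    have hlow : Real.exp (βs n * (g x0 / 4)) * m ≤ ∫ x, Real.exp (βs n * gs n x) ∂μ := by
      calc Real.exp (βs n * (g x0 / 4)) * m
          ≤ ∫ x in U, Real.exp (βs n * gs n x) ∂μ := by
            apply setIntegral_ge_of_const_le_real hUopen.measurableSet hμUfin
            · intro x hx
              exact Real.exp_le_exp.2 (mul_le_mul_of_nonneg_left (hgeU x hx) (hβpos n).le)
            · exact (hintg n).integrableOn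
        _ ≤ ∫ x, Real.exp (βs n * gs n x) ∂μ :=
            setIntegral_le_integral (hintg n) (Eventually.of_forall fun x => (Real.exp_pos _).le)
    rw [hint n] at hlow
    have : (2:ℝ) ≤ 1 := by
      have h2 : 2 / m * m ≤ Real.exp (βs n * (g x0 / 4)) * m :=
        mul_le_mul_of_nonneg_right hexp hmpos.le
      rw [div_mul_cancel₀ _ hmpos.ne'] at h2
      linarith
    linarith

lemma ciSup_eq_max {X : Type*} [TopologicalSpace X] [CompactSpace X] [Nonempty X]
    (f : X → ℝ) (hf : Continuous f) :
    ∃ x0, (∀ x, f x ≤ f x0) ∧ (⨆ x, f x) = f x0 := by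
  obtain ⟨x0, -, hx0⟩ := isCompact_univ.exists_isMaxOn Set.univ_nonempty hf.continuousOn
  have hx0' : ∀ x, f x ≤ f x0 := fun x => hx0 (Set.mem_univ x)
  exact ⟨x0, hx0', le_antisymm (ciSup_le hx0') (le_ciSup ⟨f x0, Set.forall_mem_range.2 hx0'⟩ x0)⟩

theorem stmt9
    {X Y : Type*}
    [MetricSpace X] [CompactSpace X] [MeasurableSpace X] [BorelSpace X]
    [MetricSpace Y] [CompactSpace Y] [MeasurableSpace Y] [BorelSpace Y]
    (μ : Measure X) [IsProbabilityMeasure μ] [μ.IsOpenPosMeasure]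
    (ν : Measure Y) [IsProbabilityMeasure ν] [ν.IsOpenPosMeasure]
    (c : X × Y → ℝ) (L : ℝ)
    (hc : ∀ p q : X × Y, |c p - c q| ≤ L * (dist p.1 q.1 + dist p.2 q.2))
    (A : X × Y → ℝ) (hA : A = fun p => - c p)
    (βs : ℕ → ℝ) (hβpos : ∀ n, 0 < βs n) (hβtop : Tendsto βs atTop atTop)
    (φs : ℕ → X → ℝ) (ψs : ℕ → Y → ℝ)
    (hφc : ∀ n, Continuous (φs n)) (hψc : ∀ n, Continuous (ψs n))
    (h1 : ∀ n, ∀ y : Y, ∫ x, Real.exp (βs n * A (x, y) + φs n x + ψs n y) ∂μ = 1)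
    (h2 : ∀ n, ∀ x : X, ∫ y, Real.exp (βs n * A (x, y) + φs n x + ψs n y) ∂ν = 1)
    (φ : X → ℝ) (ψ : Y → ℝ)
    (hφ : TendstoUniformly (fun n x => φs n x / βs n) φ atTop)
    (hψ : TendstoUniformly (fun n y => ψs n y / βs n) ψ atTop)
    :
    (∀ y : Y, (⨆ x : X, (A (x, y) + φ x + ψ y)) = 0) ∧
    (∀ x : X, (⨆ y : Y, (A (x, y) + φ x + ψ y)) = 0) ∧
    (∀ y : Y, ψ y = ⨅ x : X, (c (x, y) - φ x)) ∧
    (∀ x : X, φ x = ⨅ y : Y, (c (x, y) - ψ y)) ∧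
    (∀ x : X, ∀ y : Y, φ x + ψ y ≤ c (x, y)) := by
  -- continuity of c
  have hcC : Continuous c := by
    have hL' : ∀ p q : X × Y, |c p - c q| ≤ (max L 0) * (dist p.1 q.1 + dist p.2 q.2) := by
      intro p q
      exact (hc p q).trans (mul_le_mul_of_nonneg_right (le_max_left _ _)
        (by positivity))
    apply (LipschitzWith.of_dist_le_mul (K := (Real.toNNReal (2 * max L 0))) ?_).continuous
    intro p q
    rw [Real.dist_eq]
    refine (hL' p q).trans ?_
    rw [Real.coe_toNNReal _ (by positivity)]
    have h1' : dist p.1 q.1 ≤ dist p q := by rw [Prod.dist_eq]; exact le_max_left _ _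
    have h2' : dist p.2 q.2 ≤ dist p q := by rw [Prod.dist_eq]; exact le_max_right _ _
    have : (0:ℝ) ≤ max L 0 := le_max_right _ _
    nlinarith [dist_nonneg (x := p) (y := q)]
  have hAC : Continuous A := by rw [hA]; exact hcC.neg
  have hφC : Continuous φ := hφ.continuous (Eventually.of_forall
    (fun n => (hφc n).div_const _)).frequently
  have hψC : Continuous ψ := hψ.continuous (Eventually.of_forall
    (fun n => (hψc n).div_const _)).frequently
  have hXne : Nonempty X := by
    by_contra h
    rw [not_nonempty_iff] at h
    have h1' : μ Set.univ = 1 := measure_univ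
    rw [Set.univ_eq_empty_iff.2 h] at h1'
    rw [measure_empty] at h1'
    exact zero_ne_one h1'
  have hYne : Nonempty Y := by
    by_contra h
    rw [not_nonempty_iff] at h
    have h1' : ν Set.univ = 1 := measure_univ
    rw [Set.univ_eq_empty_iff.2 h] at h1'
    rw [measure_empty] at h1'
    exact zero_ne_one h1'
  -- claim 1
  have contAy : ∀ y : Y, Continuous (fun x : X => A (x, y)) := fun y =>
    hAC.comp (continuous_id.prodMk continuous_const)
  have contAx : ∀ x : X, Continuous (fun y : Y => A (x, y)) := fun x =>
    hAC.comp (continuous_const.prodMk continuous_id)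
  have claim1 : ∀ y : Y, (⨆ x : X, (A (x, y) + φ x + ψ y)) = 0 := by
    intro y
    apply key_lap μ βs hβpos hβtop
      (fun n x => A (x, y) + φs n x / βs n + ψs n y / βs n)
      (fun n => ((contAy y).add ((hφc n).div_const _)).add continuous_const)
    · intro n
      rw [← h1 n y]
      congr 1
      funext x
      have hne := (hβpos n).ne'
      field_simp
    · -- uniform convergence
      have hψy : Tendsto (fun n => ψs n y / βs n) atTop (𝓝 (ψ y)) :=
        hψ.tendsto_at y
      have u1 : TendstoUniformly (fun (_ : ℕ) (x : X) => A (x, y)) (fun x => A (x, y)) atTop := by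
        rw [Metric.tendstoUniformly_iff]
        intro ε hε
        filter_upwards with n x
        simpa using hε
      have u3 : TendstoUniformly (fun (n : ℕ) (_ : X) => ψs n y / βs n) (fun _ => ψ y) atTop :=
        tendstoUniformlyOn_univ.1 (hψy.tendstoUniformlyOn_const Set.univ)
      exact (u1.add hφ).add u3
  -- claim 2
  have claim2 : ∀ x : X, (⨆ y : Y, (A (x, y) + φ x + ψ y)) = 0 := by
    intro x
    apply key_lap ν βs hβpos hβtop
      (fun n y => A (x, y) + φs n x / βs n + ψs n y / βs n)
      (fun n => (((contAx x).add continuous_const)).add ((hψc n).div_const _))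
    · intro n
      rw [← h2 n x]
      congr 1
      funext y
      have hne := (hβpos n).ne'
      field_simp
    · have hφx : Tendsto (fun n => φs n x / βs n) atTop (𝓝 (φ x)) :=
        hφ.tendsto_at x
      have u1 : TendstoUniformly (fun (_ : ℕ) (y : Y) => A (x, y)) (fun y => A (x, y)) atTop := by
        rw [Metric.tendstoUniformly_iff]
        intro ε hε
        filter_upwards with n y
        simpa using hε
      have u2 : TendstoUniformly (fun (n : ℕ) (_ : Y) => φs n x / βs n) (fun _ => φ x) atTop :=
        tendstoUniformlyOn_univ.1 (hφx.tendstoUniformlyOn_const Set.univ)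
      exact (u1.add u2).add hψ
  -- claim 3
  have claim3 : ∀ y : Y, ψ y = ⨅ x : X, (c (x, y) - φ x) := by
    intro y
    obtain ⟨x0, hx0, hsup⟩ := ciSup_eq_max (fun x => A (x, y) + φ x + ψ y)
      (((contAy y).add hφC).add continuous_const)
    have hzero : A (x0, y) + φ x0 + ψ y = 0 := by
      rw [← hsup]; exact claim1 y
    have hrw : ∀ x : X, c (x, y) - φ x = ψ y - (A (x, y) + φ x + ψ y) := by
      intro x; rw [hA]; ring
    have hbdd : BddBelow (Set.range fun x : X => c (x, y) - φ x) := by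
      refine ⟨ψ y - (A (x0, y) + φ x0 + ψ y), Set.forall_mem_range.2 fun x => ?_⟩
      rw [hrw x]
      have := hx0 x
      linarith
    apply le_antisymm
    · apply le_ciInf
      intro x
      rw [hrw x]
      have := hx0 x
      linarith
    · have := ciInf_le hbdd x0
      rw [hrw x0] at this
      linarith
  -- claim 4
  have claim4 : ∀ x : X, φ x = ⨅ y : Y, (c (x, y) - ψ y) := by
    intro x
    obtain ⟨y0, hy0, hsup⟩ := ciSup_eq_max (fun y => A (x, y) + φ x + ψ y)
      (((contAx x).add continuous_const).add hψC)
    have hzero : A (x, y0) + φ x + ψ y0 = 0 := by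
      rw [← hsup]; exact claim2 x
    have hrw : ∀ y : Y, c (x, y) - ψ y = φ x - (A (x, y) + φ x + ψ y) := by
      intro y; rw [hA]; ring
    have hbdd : BddBelow (Set.range fun y : Y => c (x, y) - ψ y) := by
      refine ⟨φ x - (A (x, y0) + φ x + ψ y0), Set.forall_mem_range.2 fun y => ?_⟩
      rw [hrw y]
      have := hy0 y
      linarith
    apply le_antisymm
    · apply le_ciInf
      intro y
      rw [hrw y]
      have := hy0 y
      linarith
    · have := ciInf_le hbdd y0
      rw [hrw y0] at this
      linarith
  -- claim 5
  have claim5 : ∀ x : X, ∀ y : Y, φ x + ψ y ≤ c (x, y) := by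
    intro x y
    obtain ⟨x0, hx0, hsup⟩ := ciSup_eq_max (fun x => A (x, y) + φ x + ψ y)
      (((contAy y).add hφC).add continuous_const)
    have hzero : A (x0, y) + φ x0 + ψ y = 0 := by
      rw [← hsup]; exact claim1 y
    have h1' := hx0 x
    have : A (x, y) = -c (x, y) := by rw [hA]
    linarith
  exact ⟨claim1, claim2, claim3, claim4, claim5⟩
end

section
/- Let (β_n) be a sequence of positive reals with β_n → +∞, and for each n let (φ_n, ψ_n) be a pair of β_n-potentials. Suppose φ_n/β_n converges uniformly to φ : X → ℝ and ψ_n/β_n converges uniformly to ψ : Y → ℝ. Then φ(x) + ψ(y) ≤ c(x,y) for all (x,y) and ∫ φ dμ + ∫ ψ dν = α(c); that is, (φ,ψ) is a solution of the Kantorovich dual problem. -/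
open MeasureTheory Filter

open scoped ENNReal NNReal

/-- A continuous real function on a compact space is integrable w.r.t. any finite measure. -/
lemma contIntegrable' {Z : Type*} [TopologicalSpace Z] [CompactSpace Z]
    [MeasurableSpace Z] [OpensMeasurableSpace Z] (m : Measure Z) [IsFiniteMeasure m]
    {f : Z → ℝ} (hf : Continuous f) : Integrable f m := by
  obtain ⟨C, hC⟩ := isCompact_univ.exists_bound_of_continuousOn hf.continuousOn
  have h : IntegrableOn f Set.univ m :=
    Measure.integrableOn_of_bounded (measure_ne_top m _) hf.aestronglyMeasurable
      (Filter.Eventually.of_forall fun x => hC x (Set.mem_univ x))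
  simpa [IntegrableOn] using h

lemma exp_sub_one_le_mul_exp (t : ℝ) : Real.exp t - 1 ≤ t * Real.exp t := by
  have h0 : Real.exp (-t) * Real.exp t = 1 := by
    rw [← Real.exp_add]; simp
  have h1 : (-t + 1) * Real.exp t ≤ Real.exp (-t) * Real.exp t :=
    mul_le_mul_of_nonneg_right (Real.add_one_le_exp (-t)) (Real.exp_pos t).le
  nlinarith [Real.exp_pos t]

/-- Integrals converge along uniform convergence, over a probability measure. -/
lemma integral_tendsto_of_unif {Z : Type*} [MeasurableSpace Z]
    (m : Measure Z) [IsProbabilityMeasure m] {F : ℕ → Z → ℝ} {f : Z → ℝ}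
    (hF : ∀ n, Integrable (F n) m) (hf : Integrable f m)
    (h : TendstoUniformly F f atTop) :
    Tendsto (fun n => ∫ z, F n z ∂m) atTop (nhds (∫ z, f z ∂m)) := by
  rw [Metric.tendsto_atTop]
  intro ε hε
  obtain ⟨N, hN⟩ := eventually_atTop.1 (Metric.tendstoUniformly_iff.1 h (ε/2) (by linarith))
  refine ⟨N, fun n hn => ?_⟩
  have h2 : ‖∫ z, (F n z - f z) ∂m‖ ≤ ε/2 := by
    have hb : ∀ᵐ z ∂m, ‖F n z - f z‖ ≤ ε/2 := by
      refine Filter.Eventually.of_forall fun z => ?_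
      have := hN n hn z
      rw [dist_comm, Real.dist_eq] at this
      simpa [Real.norm_eq_abs] using this.le
    have := norm_integral_le_of_norm_le (integrable_const (ε/2)) hb
    simpa [measure_univ] using this
  calc dist (∫ z, F n z ∂m) (∫ z, f z ∂m)
      = ‖∫ z, (F n z - f z) ∂m‖ := by rw [dist_eq_norm, integral_sub (hF n) hf]
    _ ≤ ε/2 := h2
    _ < ε := by linarith

theorem stmt10
    {X Y : Type*}
    [MetricSpace X] [CompactSpace X] [MeasurableSpace X] [BorelSpace X]
    [MetricSpace Y] [CompactSpace Y] [MeasurableSpace Y] [BorelSpace Y]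
    (μ : Measure X) [IsProbabilityMeasure μ] [μ.IsOpenPosMeasure]
    (ν : Measure Y) [IsProbabilityMeasure ν] [ν.IsOpenPosMeasure]
    (c : X × Y → ℝ) (L : ℝ)
    (hc : ∀ p q : X × Y, |c p - c q| ≤ L * (dist p.1 q.1 + dist p.2 q.2))
    (A : X × Y → ℝ) (hA : A = fun p => - c p)
    (βs : ℕ → ℝ) (hβpos : ∀ n, 0 < βs n) (hβtop : Tendsto βs atTop atTop)
    (φs : ℕ → X → ℝ) (ψs : ℕ → Y → ℝ)
    (hφc : ∀ n, Continuous (φs n)) (hψc : ∀ n, Continuous (ψs n))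
    (h1 : ∀ n, ∀ y : Y, ∫ x, Real.exp (βs n * A (x, y) + φs n x + ψs n y) ∂μ = 1)
    (h2 : ∀ n, ∀ x : X, ∫ y, Real.exp (βs n * A (x, y) + φs n x + ψs n y) ∂ν = 1)
    (φ : X → ℝ) (ψ : Y → ℝ)
    (hφ : TendstoUniformly (fun n x => φs n x / βs n) φ atTop)
    (hψ : TendstoUniformly (fun n y => ψs n y / βs n) ψ atTop)
    :
    (∀ x : X, ∀ y : Y, φ x + ψ y ≤ c (x, y)) ∧
    ∫ x, φ x ∂μ + ∫ y, ψ y ∂ν = transportCost μ ν c := by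
  subst hA
  have h1' : ∀ n, ∀ y : Y, ∫ x, Real.exp (βs n * (-c (x, y)) + φs n x + ψs n y) ∂μ = 1 := h1
  have h2' : ∀ n, ∀ x : X, ∫ y, Real.exp (βs n * (-c (x, y)) + φs n x + ψs n y) ∂ν = 1 := h2
  -- continuity of c
  have hccont : Continuous c := by
    rw [Metric.continuous_iff]
    intro p ε hε
    refine ⟨ε / (2*(|L|+1)), by positivity, fun q hq => ?_⟩
    have habs : |c q - c p| ≤ (|L|+1) * (dist q.1 p.1 + dist q.2 p.2) := by
      refine (hc q p).trans ?_
      have h0 : (0:ℝ) ≤ dist q.1 p.1 + dist q.2 p.2 := by positivity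
      nlinarith [le_abs_self L]
    have hd1 : dist q.1 p.1 ≤ dist q p := by rw [Prod.dist_eq]; exact le_max_left _ _
    have hd2 : dist q.2 p.2 ≤ dist q p := by rw [Prod.dist_eq]; exact le_max_right _ _
    have hLpos : (0:ℝ) < |L| + 1 := by positivity
    rw [Real.dist_eq]
    calc |c q - c p| ≤ (|L|+1) * (dist q.1 p.1 + dist q.2 p.2) := habs
      _ ≤ (|L|+1) * (2 * dist q p) := by
          apply mul_le_mul_of_nonneg_left (by linarith) hLpos.le
      _ < (|L|+1) * (2 * (ε / (2*(|L|+1)))) := by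
          apply mul_lt_mul_of_pos_left (by linarith) hLpos
      _ = ε := by field_simp
  have hφcont : Continuous φ :=
    hφ.continuous (Filter.Frequently.of_forall fun n => (hφc n).div_const _)
  have hψcont : Continuous ψ :=
    hψ.continuous (Filter.Frequently.of_forall fun n => (hψc n).div_const _)
  -- Part 1
  have part1 : ∀ x : X, ∀ y : Y, φ x + ψ y ≤ c (x, y) := by
    by_contra hcon
    push_neg at hcon
    obtain ⟨x, y, hxy⟩ := hcon
    set ε := φ x + ψ y - c (x, y) with hεdef
    have hεpos : 0 < ε := by simp only [hεdef]; linarith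
    set G : X → ℝ := fun x' => -c (x', y) + φ x' with hGdef
    have hGcont : Continuous G :=
      ((hccont.comp (continuous_id.prodMk continuous_const)).neg).add hφcont
    have hGx : G x = ε - ψ y := by simp only [hGdef, hεdef]; ring
    obtain ⟨δ, hδpos, hδ⟩ := Metric.continuousAt_iff.1 hGcont.continuousAt (ε/2) (by linarith)
    have hballpos : 0 < μ (Metric.ball x δ) := Metric.measure_ball_pos μ x hδpos
    set mr := (μ (Metric.ball x δ)).toReal with hmrdef
    have hmrpos : 0 < mr := ENNReal.toReal_pos hballpos.ne' (measure_ne_top μ _)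
    set K : ℝ := (4/ε) * (Real.log (1/mr) + 1) with hKdef
    have EA := Metric.tendstoUniformly_iff.1 hφ (ε/8) (by linarith)
    have EB := Metric.tendstoUniformly_iff.1 hψ (ε/8) (by linarith)
    have EC := hβtop.eventually_ge_atTop K
    obtain ⟨n, hnA, hnB, hnC⟩ := (EA.and (EB.and EC)).exists
    set F : X → ℝ := fun x' => Real.exp (βs n * (-c (x', y)) + φs n x' + ψs n y) with hFdef
    have hFcont : Continuous F := by
      apply Real.continuous_exp.comp
      exact ((continuous_const.mul (hccont.comp
        (continuous_id.prodMk continuous_const)).neg).add (hφc n)).add continuous_const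
    have hFint : Integrable F μ := contIntegrable' μ hFcont
    -- lower bound on the exponent on the ball
    have hbound : ∀ x' ∈ Metric.ball x δ, Real.exp (βs n * (ε/4)) ≤ F x' := by
      intro x' hx'
      have hGx' : ε/2 - ψ y < G x' := by
        have := hδ (Metric.mem_ball.1 hx')
        rw [Real.dist_eq, hGx] at this
        have := abs_lt.1 this
        linarith [this.1]
      have e1 : φ x' - ε/8 < φs n x' / βs n := by
        have := hnA x'
        rw [Real.dist_eq] at this
        linarith [(abs_lt.1 this).2]
      have e2 : ψ y - ε/8 < ψs n y / βs n := by
        have := hnB y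
        rw [Real.dist_eq] at this
        linarith [(abs_lt.1 this).2]
      have hβne : βs n ≠ 0 := (hβpos n).ne'
      have key : ε/4 ≤ (-c (x', y)) + φs n x' / βs n + ψs n y / βs n := by
        have : -c (x', y) + φ x' = G x' := rfl
        linarith
      have hmul : βs n * (ε/4) ≤ βs n * ((-c (x', y)) + φs n x' / βs n + ψs n y / βs n) :=
        mul_le_mul_of_nonneg_left key (hβpos n).le
      have hexpand : βs n * ((-c (x', y)) + φs n x' / βs n + ψs n y / βs n)
          = βs n * (-c (x', y)) + φs n x' + ψs n y := by
        field_simp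
      rw [hexpand] at hmul
      exact Real.exp_le_exp.2 hmul
    have hlow : Real.exp (βs n * (ε/4)) * mr ≤ ∫ x' in Metric.ball x δ, F x' ∂μ :=
      by have := setIntegral_ge_of_const_le Metric.isOpen_ball.measurableSet (measure_ne_top μ _)
           hbound hFint.integrableOn
         rw [smul_eq_mul, mul_comm] at this; exact this
    have hup : ∫ x' in Metric.ball x δ, F x' ∂μ ≤ ∫ x', F x' ∂μ :=
      setIntegral_le_integral hFint (Filter.Eventually.of_forall fun x' => (Real.exp_pos _).le)
    have hone : ∫ x', F x' ∂μ = 1 := h1' n y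
    -- but exp(βs n * ε/4) * mr > 1
    have hKε : K * (ε/4) = Real.log (1/mr) + 1 := by
      rw [hKdef]; field_simp
    have hββ : Real.log (1/mr) + 1 ≤ βs n * (ε/4) := by
      rw [← hKε]
      exact mul_le_mul_of_nonneg_right hnC (by linarith)
    have hexp : (1/mr) * Real.exp 1 ≤ Real.exp (βs n * (ε/4)) := by
      calc (1/mr) * Real.exp 1 = Real.exp (Real.log (1/mr)) * Real.exp 1 := by
            rw [Real.exp_log (by positivity)]
        _ = Real.exp (Real.log (1/mr) + 1) := by rw [← Real.exp_add]
        _ ≤ Real.exp (βs n * (ε/4)) := Real.exp_le_exp.2 hββ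
    have hgt : 1 < Real.exp (βs n * (ε/4)) * mr := by
      have h2le : (2:ℝ) ≤ Real.exp 1 := by
        have := Real.add_one_le_exp (1:ℝ); linarith
      have : (1/mr) * Real.exp 1 * mr ≤ Real.exp (βs n * (ε/4)) * mr :=
        mul_le_mul_of_nonneg_right hexp hmrpos.le
      have heq : (1/mr) * Real.exp 1 * mr = Real.exp 1 := by field_simp
      nlinarith
    rw [hone] at hup
    linarith
  refine ⟨part1, ?_⟩
  -- Part 2
  have hprodint : ∀ f : X × Y → ℝ, Continuous f → Integrable f (μ.prod ν) :=
    fun f hf => contIntegrable' (μ.prod ν) hf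
  -- weak duality
  have claim1 : ∀ π : Measure (X × Y), IsPlan μ ν π →
      (∫ x, φ x ∂μ) + (∫ y, ψ y ∂ν) ≤ ∫ p, c p ∂π := by
    rintro π ⟨hπp, hπ1, hπ2⟩
    haveI := hπp
    have hφint : Integrable (fun p : X × Y => φ p.1) π :=
      contIntegrable' π (hφcont.comp continuous_fst)
    have hψint : Integrable (fun p : X × Y => ψ p.2) π :=
      contIntegrable' π (hψcont.comp continuous_snd)
    have e1 : ∫ p, φ p.1 ∂π = ∫ x, φ x ∂μ := by
      have := integral_map (φ := Prod.fst) measurable_fst.aemeasurable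
        (f := φ) (hφcont.aestronglyMeasurable (μ := π.map Prod.fst))
      rw [hπ1] at this
      exact this.symm
    have e2 : ∫ p, ψ p.2 ∂π = ∫ y, ψ y ∂ν := by
      have := integral_map (φ := Prod.snd) measurable_snd.aemeasurable
        (f := ψ) (hψcont.aestronglyMeasurable (μ := π.map Prod.snd))
      rw [hπ2] at this
      exact this.symm
    calc (∫ x, φ x ∂μ) + (∫ y, ψ y ∂ν) = ∫ p, (φ p.1 + ψ p.2) ∂π := by
          rw [integral_add hφint hψint, e1, e2]
      _ ≤ ∫ p, c p ∂π := by
          refine integral_mono (hφint.add hψint) (contIntegrable' π hccont) fun p => ?_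
          simpa using part1 p.1 p.2
    -- end claim1
  haveI hne : Nonempty {π : Measure (X × Y) // IsPlan μ ν π} := by
    refine ⟨⟨μ.prod ν, inferInstance, ?_, ?_⟩⟩
    · simp [Measure.map_fst_prod, measure_univ]
    · simp [Measure.map_snd_prod, measure_univ]
  have hbdd : BddBelow (Set.range fun π : {π : Measure (X × Y) // IsPlan μ ν π}
      => ∫ p, c p ∂(π.1)) := by
    refine ⟨(∫ x, φ x ∂μ) + (∫ y, ψ y ∂ν), ?_⟩
    rintro r ⟨π, rfl⟩
    exact claim1 π.1 π.2
  -- lower bound direction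
  have hge : (∫ x, φ x ∂μ) + (∫ y, ψ y ∂ν) ≤ transportCost μ ν c := by
    unfold transportCost
    exact le_ciInf fun π => claim1 π.1 π.2
  -- Gibbs plans
  have key : ∀ n, transportCost μ ν c ≤
      (∫ x, φs n x / βs n ∂μ) + (∫ y, ψs n y / βs n ∂ν) := by
    intro n
    set lρ : X × Y → ℝ := fun p => βs n * (-c p) + φs n p.1 + ψs n p.2 with hlρdef
    set ρ : X × Y → ℝ := fun p => Real.exp (lρ p) with hρdef
    have hlρcont : Continuous lρ :=
      ((continuous_const.mul hccont.neg).add ((hφc n).comp continuous_fst)).add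
        ((hψc n).comp continuous_snd)
    have hρcont : Continuous ρ := Real.continuous_exp.comp hlρcont
    have hρint : Integrable ρ (μ.prod ν) := hprodint ρ hρcont
    have hρpos : ∀ p, 0 < ρ p := fun p => Real.exp_pos _
    have hslice2 : ∀ x, ∫ y, ρ (x, y) ∂ν = 1 := fun x => h2' n x
    have hslice1 : ∀ y, ∫ x, ρ (x, y) ∂μ = 1 := fun y => h1' n y
    set f : X × Y → ℝ≥0∞ := fun p => ENNReal.ofReal (ρ p) with hfdef
    have hfm : Measurable f := hρcont.measurable.ennreal_ofReal
    set πn : Measure (X × Y) := (μ.prod ν).withDensity f with hπndef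
    -- inner lintegral computations
    have hinner2 : ∀ x, ∫⁻ y, f (x, y) ∂ν = 1 := by
      intro x
      have hi : Integrable (fun y => ρ (x, y)) ν :=
        contIntegrable' ν (hρcont.comp (continuous_const.prodMk continuous_id))
      rw [show (fun y => f (x, y)) = fun y => ENNReal.ofReal (ρ (x, y)) from rfl,
        ← ofReal_integral_eq_lintegral_ofReal hi
          (Filter.Eventually.of_forall fun y => (hρpos _).le), hslice2 x]
      simp
    have hinner1 : ∀ y, ∫⁻ x, f (x, y) ∂μ = 1 := by
      intro y
      have hi : Integrable (fun x => ρ (x, y)) μ :=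
        contIntegrable' μ (hρcont.comp (continuous_id.prodMk continuous_const))
      rw [show (fun x => f (x, y)) = fun x => ENNReal.ofReal (ρ (x, y)) from rfl,
        ← ofReal_integral_eq_lintegral_ofReal hi
          (Filter.Eventually.of_forall fun x => (hρpos _).le), hslice1 y]
      simp
    have hmap1 : πn.map Prod.fst = μ := by
      ext s hs
      rw [Measure.map_apply measurable_fst hs]
      have hpre : Prod.fst ⁻¹' s = s ×ˢ (Set.univ : Set Y) := by
        ext p; simp
      rw [hpre, hπndef, withDensity_apply _ (hs.prod MeasurableSet.univ),
        ← Measure.prod_restrict, Measure.restrict_univ,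
        lintegral_prod _ hfm.aemeasurable]
      simp only [hinner2]
      simp
    have hmap2 : πn.map Prod.snd = ν := by
      ext s hs
      rw [Measure.map_apply measurable_snd hs]
      have hpre : Prod.snd ⁻¹' s = (Set.univ : Set X) ×ˢ s := by
        ext p; simp
      rw [hpre, hπndef, withDensity_apply _ (MeasurableSet.univ.prod hs),
        ← Measure.prod_restrict, Measure.restrict_univ,
        lintegral_prod_symm _ hfm.aemeasurable]
      simp only [hinner1]
      simp
    haveI hπnprob : IsProbabilityMeasure πn := by
      constructor
      have h := Measure.map_apply (μ := πn) measurable_fst (MeasurableSet.univ (α := X))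
      rw [hmap1] at h
      simpa [measure_univ] using h.symm
    have hplan : IsPlan μ ν πn := ⟨hπnprob, hmap1, hmap2⟩
    -- integral transfer
    have hfnn : Measurable fun p => (ρ p).toNNReal := hρcont.measurable.real_toNNReal
    have htrans : ∀ g : X × Y → ℝ, ∫ p, g p ∂πn = ∫ p, ρ p * g p ∂(μ.prod ν) := by
      intro g
      have : πn = (μ.prod ν).withDensity fun p => ((ρ p).toNNReal : ℝ≥0∞) := rfl
      rw [this, integral_withDensity_eq_integral_smul hfnn]
      congr 1
      ext p
      simp [NNReal.smul_def, Real.coe_toNNReal _ (hρpos p).le]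
    -- entropy inequality : 0 ≤ ∫ lρ * ρ
    have hρ1 : ∫ p, ρ p ∂(μ.prod ν) = 1 := by
      rw [MeasureTheory.integral_prod _ hρint]
      simp only [hslice2]
      simp
    have hlρρint : Integrable (fun p => lρ p * ρ p) (μ.prod ν) :=
      hprodint _ (hlρcont.mul hρcont)
    have hent : 0 ≤ ∫ p, lρ p * ρ p ∂(μ.prod ν) := by
      have hmono : ∫ p, (ρ p - 1) ∂(μ.prod ν) ≤ ∫ p, lρ p * ρ p ∂(μ.prod ν) :=
        integral_mono (hρint.sub (integrable_const 1)) hlρρint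
          (fun p => exp_sub_one_le_mul_exp (lρ p))
      rwa [integral_sub hρint (integrable_const 1), hρ1, integral_const,
        measureReal_def, measure_univ, ENNReal.toReal_one, one_smul, sub_self] at hmono
    -- rewrite as integral w.r.t. πn and split
    have hlρπ : 0 ≤ ∫ p, lρ p ∂πn := by
      rw [htrans lρ]
      have : ∀ p, ρ p * lρ p = lρ p * ρ p := fun p => mul_comm _ _
      rw [show (fun p => ρ p * lρ p) = fun p => lρ p * ρ p from funext this]
      exact hent
    have hcint : Integrable c πn := contIntegrable' πn hccont
    have hφsint : Integrable (fun p : X × Y => φs n p.1) πn :=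
      contIntegrable' πn ((hφc n).comp continuous_fst)
    have hψsint : Integrable (fun p : X × Y => ψs n p.2) πn :=
      contIntegrable' πn ((hψc n).comp continuous_snd)
    have hsplit : ∫ p, lρ p ∂πn
        = βs n * (∫ p, -c p ∂πn) + ∫ p, φs n p.1 ∂πn + ∫ p, ψs n p.2 ∂πn := by
      have i1 : Integrable (fun p : X × Y => βs n * (-c p)) πn :=
        contIntegrable' πn (continuous_const.mul hccont.neg)
      have i12 : Integrable (fun p : X × Y => βs n * (-c p) + φs n p.1) πn := i1.add hφsint
      have e01 : ∫ p, lρ p ∂πn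
          = ∫ p, (βs n * (-c p) + φs n p.1) ∂πn + ∫ p, ψs n p.2 ∂πn :=
        integral_add i12 hψsint
      have e02 : ∫ p, (βs n * (-c p) + φs n p.1) ∂πn
          = ∫ p, βs n * (-c p) ∂πn + ∫ p, φs n p.1 ∂πn :=
        integral_add i1 hφsint
      have e03 : ∫ p, βs n * (-c p) ∂πn = βs n * ∫ p, -c p ∂πn := integral_const_mul _ _
      rw [e01, e02, e03]
    have eφ : ∫ p, φs n p.1 ∂πn = ∫ x, φs n x ∂μ := by
      have := integral_map (φ := Prod.fst) measurable_fst.aemeasurable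
        (f := φs n) ((hφc n).aestronglyMeasurable (μ := πn.map Prod.fst))
      rw [hmap1] at this
      exact this.symm
    have eψ : ∫ p, ψs n p.2 ∂πn = ∫ y, ψs n y ∂ν := by
      have := integral_map (φ := Prod.snd) measurable_snd.aemeasurable
        (f := ψs n) ((hψc n).aestronglyMeasurable (μ := πn.map Prod.snd))
      rw [hmap2] at this
      exact this.symm
    have hineq : βs n * (∫ p, c p ∂πn) ≤ (∫ x, φs n x ∂μ) + (∫ y, ψs n y ∂ν) := by
      rw [hsplit, eφ, eψ, integral_neg] at hlρπ
      linarith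
    have hfinal : ∫ p, c p ∂πn ≤ (∫ x, φs n x / βs n ∂μ) + (∫ y, ψs n y / βs n ∂ν) := by
      rw [integral_div, integral_div]
      rw [← add_div, le_div_iff₀ (hβpos n)]
      linarith [hineq]
    have hciInf : transportCost μ ν c ≤ ∫ p, c p ∂πn := by
      unfold transportCost
      exact ciInf_le hbdd ⟨πn, hplan⟩
    exact hciInf.trans hfinal
  -- take the limit
  have htend : Tendsto (fun n => (∫ x, φs n x / βs n ∂μ) + (∫ y, ψs n y / βs n ∂ν))
      atTop (nhds ((∫ x, φ x ∂μ) + (∫ y, ψ y ∂ν))) := by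
    refine Tendsto.add ?_ ?_
    · exact integral_tendsto_of_unif μ (fun n => contIntegrable' μ ((hφc n).div_const _))
        (contIntegrable' μ hφcont) hφ
    · exact integral_tendsto_of_unif ν (fun n => contIntegrable' ν ((hψc n).div_const _))
        (contIntegrable' ν hψcont) hψ
  have hle : transportCost μ ν c ≤ (∫ x, φ x ∂μ) + (∫ y, ψ y ∂ν) :=
    ge_of_tendsto' htend key
  linarith
end

section
/- For each β > 0 let (φ_β, ψ_β) be a pair of β-potentials and let π_β be the probability measure on X×Y with density e^{βA+φ_β+ψ_β} with respect to μ×ν. If π is a weak* accumulation point of the family (π_β) as β → +∞, then π ∈ Π(μ,ν) and ∫ c dπ = α(c); that is, π is an optimal transference plan for the Monge–Kantorovich problem with cost c. -/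
open MeasureTheory Filter

open Set Metric
open scoped ENNReal NNReal

lemma aux_integrable {Z : Type*} [TopologicalSpace Z] [CompactSpace Z] [T2Space Z]
    [MeasurableSpace Z] [OpensMeasurableSpace Z] (ρ : Measure Z) [IsFiniteMeasure ρ]
    {f : Z → ℝ} (hf : Continuous f) : Integrable f ρ :=
  hf.integrable_of_hasCompactSupport (HasCompactSupport.of_compactSpace f)

lemma aux_bound {Z : Type*} [TopologicalSpace Z] [CompactSpace Z] [Nonempty Z]
    {f : Z → ℝ} (hf : Continuous f) : ∃ M : ℝ, 0 ≤ M ∧ ∀ z, |f z| ≤ M := by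
  obtain ⟨z0, -, hz0⟩ := isCompact_univ.exists_isMaxOn univ_nonempty hf.abs.continuousOn
  exact ⟨|f z0|, abs_nonneg _, fun z => hz0 (mem_univ z)⟩

lemma measure_ext_cont {Z : Type*} [MetricSpace Z] [CompactSpace Z] [MeasurableSpace Z]
    [BorelSpace Z] {ρ1 ρ2 : Measure Z} [IsFiniteMeasure ρ1] [IsFiniteMeasure ρ2]
    (h : ∀ f : Z → ℝ, Continuous f → ∫ z, f z ∂ρ1 = ∫ z, f z ∂ρ2) : ρ1 = ρ2 := by
  apply ext_of_forall_lintegral_eq_of_IsFiniteMeasure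
  intro f
  have hfc : Continuous fun z => (f z : ℝ) := NNReal.continuous_coe.comp f.continuous
  have key : ∀ (ρ : Measure Z) [IsFiniteMeasure ρ],
      ∫⁻ z, (f z : ℝ≥0∞) ∂ρ = ENNReal.ofReal (∫ z, (f z : ℝ) ∂ρ) := by
    intro ρ _
    rw [ofReal_integral_eq_lintegral_ofReal (aux_integrable ρ hfc)
      (Filter.Eventually.of_forall fun z => (f z).coe_nonneg)]
    simp [ENNReal.ofReal_coe_nnreal]
  rw [key ρ1, key ρ2, h _ hfc]

lemma map_fst_withDensity {X Y : Type*} [MeasurableSpace X] [MeasurableSpace Y]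
    (μ : Measure X) [IsProbabilityMeasure μ] (ν : Measure Y) [IsProbabilityMeasure ν]
    {w : X × Y → ℝ≥0∞} (hw : Measurable w)
    (h : ∀ᵐ x ∂μ, ∫⁻ y, w (x, y) ∂ν = 1) :
    ((μ.prod ν).withDensity w).map Prod.fst = μ := by
  ext s hs
  rw [Measure.map_apply measurable_fst hs, withDensity_apply _ (measurable_fst hs)]
  have hps : Prod.fst ⁻¹' s = s ×ˢ (univ : Set Y) := by
    ext p; simp [Set.mem_prod]
  rw [hps, ← Measure.restrict_prod_eq_prod_univ,
    lintegral_prod _ hw.aemeasurable]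
  calc ∫⁻ x, ∫⁻ y, w (x, y) ∂ν ∂(μ.restrict s)
      = ∫⁻ x, 1 ∂(μ.restrict s) := lintegral_congr_ae (ae_restrict_of_ae h)
    _ = μ s := by simp

lemma map_snd_withDensity {X Y : Type*} [MeasurableSpace X] [MeasurableSpace Y]
    (μ : Measure X) [IsProbabilityMeasure μ] (ν : Measure Y) [IsProbabilityMeasure ν]
    {w : X × Y → ℝ≥0∞} (hw : Measurable w)
    (h : ∀ᵐ y ∂ν, ∫⁻ x, w (x, y) ∂μ = 1) :
    ((μ.prod ν).withDensity w).map Prod.snd = ν := by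
  ext s hs
  rw [Measure.map_apply measurable_snd hs, withDensity_apply _ (measurable_snd hs)]
  have hps : Prod.snd ⁻¹' s = (univ : Set X) ×ˢ s := by
    ext p; simp [Set.mem_prod]
  have hres : (μ.prod ν).restrict ((univ : Set X) ×ˢ s) = μ.prod (ν.restrict s) := by
    rw [← Measure.prod_restrict, Measure.restrict_univ]
  rw [hps, hres, lintegral_prod_symm _ hw.aemeasurable]
  calc ∫⁻ y, ∫⁻ x, w (x, y) ∂μ ∂(ν.restrict s)
      = ∫⁻ y, 1 ∂(ν.restrict s) := lintegral_congr_ae (ae_restrict_of_ae h)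
    _ = ν s := by simp

lemma exists_partition {Z : Type*} [MetricSpace Z] [CompactSpace Z] [Nonempty Z]
    [MeasurableSpace Z] [BorelSpace Z] {δ : ℝ} (hδ : 0 < δ) :
    ∃ (n : ℕ) (u : Fin n → Z) (f : Z → Fin n),
      Measurable f ∧ ∀ z, dist z (u (f z)) < δ := by
  classical
  obtain ⟨t, -, htf, hcov⟩ :=
    (isCompact_univ : IsCompact (Set.univ : Set Z)).finite_cover_balls hδ
  set s : Finset Z := htf.toFinset with hs
  set n := s.card with hn
  set e := s.equivFin with he
  set u : Fin n → Z := fun i => (e.symm i : Z) with hu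
  have hcov2 : ∀ z : Z, ∃ i : Fin n, dist z (u i) < δ := by
    intro z
    have hz := hcov (Set.mem_univ z)
    simp only [Set.mem_iUnion, Metric.mem_ball] at hz
    obtain ⟨x, hxt, hzx⟩ := hz
    refine ⟨e ⟨x, htf.mem_toFinset.mpr hxt⟩, ?_⟩
    have : u (e ⟨x, htf.mem_toFinset.mpr hxt⟩) = x := by
      rw [hu]; simp
    rwa [this]
  set F : Z → Finset (Fin n) := fun z => Finset.univ.filter (fun i => dist z (u i) < δ) with hF
  have hmemF : ∀ z i, i ∈ F z ↔ dist z (u i) < δ := by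
    intro z i; simp [hF]
  have hFne : ∀ z, (F z).Nonempty := fun z => by
    obtain ⟨i, hi⟩ := hcov2 z
    exact ⟨i, (hmemF z i).mpr hi⟩
  set f : Z → Fin n := fun z => (F z).min' (hFne z) with hf
  have hmem : ∀ z, dist z (u (f z)) < δ := fun z =>
    (hmemF z _).mp ((F z).min'_mem (hFne z))
  have hfiber : ∀ i : Fin n, f ⁻¹' {i} =
      Metric.ball (u i) δ ∩ ⋂ j : Fin n, {z | j < i → ¬ dist z (u j) < δ} := by
    intro i
    ext z
    simp only [Set.mem_preimage, Set.mem_singleton_iff, Set.mem_inter_iff, Set.mem_iInter,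
      Set.mem_setOf_eq, Metric.mem_ball]
    constructor
    · rintro rfl
      exact ⟨hmem z, fun j hj hdj =>
        absurd ((F z).min'_le j ((hmemF z j).mpr hdj)) (not_le.mpr hj)⟩
    · rintro ⟨hdi, hlt⟩
      have h1 : f z ≤ i := (F z).min'_le i ((hmemF z i).mpr hdi)
      rcases lt_or_eq_of_le h1 with h2 | h2
      · exact absurd (hmem z) (hlt _ h2)
      · exact h2
  refine ⟨n, u, f, ?_, hmem⟩
  apply measurable_to_countable'
  intro i
  rw [hfiber i]
  refine measurableSet_ball.inter (MeasurableSet.iInter fun j => ?_)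
  by_cases hj : j < i
  · simp only [hj, true_implies]
    exact (measurableSet_ball (x := u j) (ε := δ)).compl
  · simp only [hj, false_implies, Set.setOf_true]
    exact MeasurableSet.univ

lemma integral_withDensity_ofReal {Z : Type*} [MeasurableSpace Z] (ρ : Measure Z)
    {w : Z → ℝ} (hw : Measurable w) (hwnn : ∀ z, 0 ≤ w z) (f : Z → ℝ) :
    ∫ z, f z ∂(ρ.withDensity fun z => ENNReal.ofReal (w z)) = ∫ z, w z * f z ∂ρ := by
  have : (fun z => ENNReal.ofReal (w z)) = fun z => ((Real.toNNReal (w z) : ℝ≥0) : ℝ≥0∞) := rfl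
  rw [this, integral_withDensity_eq_integral_smul hw.real_toNNReal f]
  congr 1
  ext z
  rw [NNReal.smul_def, Real.coe_toNNReal _ (hwnn z), smul_eq_mul]

lemma integral_withDensity_fin {Z : Type*} [MeasurableSpace Z] (ρ : Measure Z)
    {h : Z → ℝ≥0∞} (hm : Measurable h) (hfin : ∀ z, h z ≠ ∞) (f : Z → ℝ) :
    ∫ z, f z ∂(ρ.withDensity h) = ∫ z, (h z).toReal * f z ∂ρ := by
  have h1 : ρ.withDensity h = ρ.withDensity (fun z => ((h z).toNNReal : ℝ≥0∞)) := by
    congr 1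
    ext z
    rw [ENNReal.coe_toNNReal (hfin z)]
  rw [h1, integral_withDensity_eq_integral_smul hm.ennreal_toNNReal f]
  simp only [NNReal.smul_def, smul_eq_mul]
  rfl

lemma nonempty_of_prob {Z : Type*} [MeasurableSpace Z] (ρ : Measure Z)
    [IsProbabilityMeasure ρ] : Nonempty Z := by
  by_contra hne
  rw [not_nonempty_iff] at hne
  have h0 : ρ Set.univ = 0 := by simp [Set.univ_eq_empty_iff.mpr hne]
  rw [measure_univ] at h0
  exact one_ne_zero h0

lemma gibbs_lower {Z : Type*} [TopologicalSpace Z] [CompactSpace Z] [T2Space Z]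
    [MeasurableSpace Z] [OpensMeasurableSpace Z]
    (ρ : Measure Z) [IsProbabilityMeasure ρ] {G : Z → ℝ} (hG : Continuous G)
    (hnorm : ∫ z, Real.exp (G z) ∂ρ = 1) :
    0 ≤ ∫ z, G z ∂(ρ.withDensity fun z => ENNReal.ofReal (Real.exp (G z))) := by
  rw [integral_withDensity_ofReal ρ (w := fun z => Real.exp (G z))
    (Real.continuous_exp.comp hG).measurable (fun z => (Real.exp_pos _).le) G]
  have key : ∀ z, Real.exp (G z) - 1 ≤ Real.exp (G z) * G z := by
    intro z
    have h1 := Real.add_one_le_exp (-(G z))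
    have h2 := Real.exp_pos (G z)
    have h3 : Real.exp (G z) * Real.exp (-(G z)) = 1 := by
      rw [← Real.exp_add]; simp
    nlinarith
  have hexp : Integrable (fun z => Real.exp (G z)) ρ :=
    aux_integrable ρ (Real.continuous_exp.comp hG)
  have hint1 : Integrable (fun z => Real.exp (G z) * G z) ρ :=
    aux_integrable ρ ((Real.continuous_exp.comp hG).mul hG)
  have hint2 : Integrable (fun z => Real.exp (G z) - 1) ρ := hexp.sub (integrable_const 1)
  have hmono := integral_mono hint2 hint1 key
  have e0 : ∫ z, (Real.exp (G z) - 1) ∂ρ = 0 := by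
    rw [integral_sub hexp (integrable_const 1), hnorm]
    simp
  linarith

lemma gibbs_upper {Z : Type*} [TopologicalSpace Z] [CompactSpace Z] [T2Space Z]
    [MeasurableSpace Z] [OpensMeasurableSpace Z]
    (ρ : Measure Z) [IsProbabilityMeasure ρ] {G : Z → ℝ} (hG : Continuous G)
    (hnorm : ∫ z, Real.exp (G z) ∂ρ = 1)
    {h : Z → ℝ≥0∞} (hm : Measurable h) {M : ℝ≥0∞} (hM : M ≠ ∞) (hbd : ∀ z, h z ≤ M) :
    ∫ z, G z ∂(ρ.withDensity h) ≤ M.toReal := by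
  haveI : Nonempty Z := nonempty_of_prob ρ
  have hfin : ∀ z, h z ≠ ∞ := fun z => (lt_of_le_of_lt (hbd z) hM.lt_top).ne
  rw [integral_withDensity_fin ρ hm hfin G]
  have key : ∀ z, (h z).toReal * G z ≤ M.toReal * Real.exp (G z) := by
    intro z
    have h1 : (h z).toReal ≤ M.toReal := ENNReal.toReal_mono hM (hbd z)
    have h2 : (0:ℝ) ≤ (h z).toReal := ENNReal.toReal_nonneg
    have h3 : (0:ℝ) ≤ M.toReal := ENNReal.toReal_nonneg
    have h4 : G z + 1 ≤ Real.exp (G z) := Real.add_one_le_exp (G z)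
    have h5 := Real.exp_pos (G z)
    rcases le_or_gt 0 (G z) with hg | hg
    · nlinarith
    · nlinarith
  obtain ⟨MG, hMG0, hMG⟩ := aux_bound hG
  have hint1 : Integrable (fun z => (h z).toReal * G z) ρ := by
    refine Integrable.mono' (integrable_const (M.toReal * MG))
      ((hm.ennreal_toReal.mul hG.measurable).aestronglyMeasurable)
      (Filter.Eventually.of_forall fun z => ?_)
    have h1 : (h z).toReal ≤ M.toReal := ENNReal.toReal_mono hM (hbd z)
    rw [Real.norm_eq_abs, abs_mul, abs_of_nonneg ENNReal.toReal_nonneg]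
    exact mul_le_mul h1 (hMG z) (abs_nonneg _) ENNReal.toReal_nonneg
  have hint2 : Integrable (fun z => M.toReal * Real.exp (G z)) ρ :=
    (aux_integrable ρ (Real.continuous_exp.comp hG)).const_mul _
  calc ∫ z, (h z).toReal * G z ∂ρ ≤ ∫ z, M.toReal * Real.exp (G z) ∂ρ :=
        integral_mono hint1 hint2 key
    _ = M.toReal := by rw [integral_const_mul, hnorm, mul_one]

lemma isPlan_of_marginals {X Y : Type*} [MeasurableSpace X] [MeasurableSpace Y]
    {μ : Measure X} [IsProbabilityMeasure μ] {ν : Measure Y}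
    {π : Measure (X × Y)} (h1 : π.map Prod.fst = μ) (h2 : π.map Prod.snd = ν) :
    IsPlan μ ν π := by
  refine ⟨⟨?_⟩, h1, h2⟩
  have : π Set.univ = (π.map Prod.fst) Set.univ := by
    rw [Measure.map_apply measurable_fst MeasurableSet.univ, Set.preimage_univ]
  rw [this, h1, measure_univ]

lemma block_plan {X Y : Type*}
    [MetricSpace X] [CompactSpace X] [MeasurableSpace X] [BorelSpace X]
    [MetricSpace Y] [CompactSpace Y] [MeasurableSpace Y] [BorelSpace Y]
    (μ : Measure X) [IsProbabilityMeasure μ] (ν : Measure Y) [IsProbabilityMeasure ν]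
    {n m : ℕ} {f : X → Fin n} {g : Y → Fin m}
    (hf : Measurable f) (hg : Measurable g)
    (πs : Measure (X × Y)) (hπs : IsPlan μ ν πs) :
    ∃ (M : ℝ≥0∞) (h : X × Y → ℝ≥0∞), M ≠ ∞ ∧ Measurable h ∧ (∀ p, h p ≤ M) ∧
      IsPlan μ ν ((μ.prod ν).withDensity h) ∧
      ((μ.prod ν).withDensity h).map (fun p => (f p.1, g p.2)) =
        πs.map (fun p => (f p.1, g p.2)) := by
  classical
  haveI := hπs.1
  set S : Fin n → Set X := fun i => f ⁻¹' {i} with hS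
  set T : Fin m → Set Y := fun j => g ⁻¹' {j} with hT
  have hSm : ∀ i, MeasurableSet (S i) := fun i => hf (measurableSet_singleton i)
  have hTm : ∀ j, MeasurableSet (T j) := fun j => hg (measurableSet_singleton j)
  set a : Fin n → ℝ≥0∞ := fun i => μ (S i) with ha
  set b : Fin m → ℝ≥0∞ := fun j => ν (T j) with hb
  set w : Fin n → Fin m → ℝ≥0∞ := fun i j => πs (S i ×ˢ T j) with hw
  have hfst : ∀ i, πs (Prod.fst ⁻¹' (S i)) = a i := by
    intro i
    rw [← Measure.map_apply measurable_fst (hSm i), hπs.2.1]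
  have hsnd : ∀ j, πs (Prod.snd ⁻¹' (T j)) = b j := by
    intro j
    rw [← Measure.map_apply measurable_snd (hTm j), hπs.2.2]
  have hwa : ∀ i j, w i j ≤ a i := by
    intro i j
    rw [← hfst i]
    exact measure_mono (fun p hp => hp.1)
  have hwb : ∀ i j, w i j ≤ b j := by
    intro i j
    rw [← hsnd j]
    exact measure_mono (fun p hp => hp.2)
  have hwfin : ∀ i j, w i j ≠ ∞ := fun i j => measure_ne_top πs _
  have hsumj : ∀ i, ∑ j, w i j = a i := by
    intro i
    rw [← hfst i]
    have hU : Prod.fst ⁻¹' (S i) = ⋃ j, S i ×ˢ T j := by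
      ext p
      simp only [Set.mem_preimage, Set.mem_iUnion, Set.mem_prod, hS, hT,
        Set.mem_singleton_iff]
      exact ⟨fun hp => ⟨g p.2, hp, rfl⟩, fun ⟨j, hp, _⟩ => hp⟩
    rw [hU, measure_iUnion ?_ (fun j => (hSm i).prod (hTm j)), tsum_fintype]
    intro j k hjk
    simp only [Function.onFun, Set.disjoint_left]
    rintro p ⟨-, hp2⟩ ⟨-, hp2'⟩
    simp only [hT, Set.mem_preimage, Set.mem_singleton_iff] at hp2 hp2'
    exact hjk (hp2 ▸ hp2' ▸ rfl)
  have hsumi : ∀ j, ∑ i, w i j = b j := by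
    intro j
    rw [← hsnd j]
    have hU : Prod.snd ⁻¹' (T j) = ⋃ i, S i ×ˢ T j := by
      ext p
      simp only [Set.mem_preimage, Set.mem_iUnion, Set.mem_prod, hS, hT,
        Set.mem_singleton_iff]
      exact ⟨fun hp => ⟨f p.1, rfl, hp⟩, fun ⟨i, _, hp⟩ => hp⟩
    rw [hU, measure_iUnion ?_ (fun i => (hSm i).prod (hTm j)), tsum_fintype]
    intro i k hik
    simp only [Function.onFun, Set.disjoint_left]
    rintro p ⟨hp1, -⟩ ⟨hp1', -⟩
    simp only [hS, Set.mem_preimage, Set.mem_singleton_iff] at hp1 hp1'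
    exact hik (hp1 ▸ hp1' ▸ rfl)
  set H : Fin n × Fin m → ℝ≥0∞ := fun q => w q.1 q.2 / (a q.1 * b q.2) with hH
  set h : X × Y → ℝ≥0∞ := fun p => H (f p.1, g p.2) with hh
  set M : ℝ≥0∞ := Finset.univ.sup H with hM
  have hMfin : M ≠ ∞ := by
    rw [hM, ← lt_top_iff_ne_top, Finset.sup_lt_iff (by exact ENNReal.zero_lt_top)]
    intro q _
    rcases eq_or_ne (a q.1) 0 with h0 | h0
    · have hw0 : w q.1 q.2 = 0 := le_antisymm (h0 ▸ hwa _ _) zero_le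
      simp [hH, hw0]
    rcases eq_or_ne (b q.2) 0 with h1 | h1
    · have hw0 : w q.1 q.2 = 0 := le_antisymm (h1 ▸ hwb _ _) zero_le
      simp [hH, hw0]
    · exact ENNReal.div_lt_top (hwfin _ _) (mul_ne_zero h0 h1)
  have hhM : ∀ p, h p ≤ M := fun p => Finset.le_sup (f := H) (Finset.mem_univ (f p.1, g p.2))
  have hhmeas : Measurable h :=
    (measurable_of_finite H).comp ((hf.comp measurable_fst).prodMk (hg.comp measurable_snd))
  have hinner1 : ∀ x : X, a (f x) ≠ 0 → ∫⁻ y, h (x, y) ∂ν = 1 := by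
    intro x hx
    have hpt : (fun y => h (x, y)) =
        fun y => ∑ j, (T j).indicator (fun _ => H (f x, j)) y := by
      funext y
      rw [Finset.sum_eq_single_of_mem (g y) (Finset.mem_univ _)]
      · rw [Set.indicator_of_mem (by simp [hT] : y ∈ T (g y))]
      · intro j _ hj
        refine Set.indicator_of_notMem ?_ _
        simp only [hT, Set.mem_preimage, Set.mem_singleton_iff]
        exact fun hc => hj hc.symm
    rw [hpt, lintegral_finset_sum _ (fun j _ => measurable_const.indicator (hTm j))]
    have hterm : ∀ j, ∫⁻ y, (T j).indicator (fun _ => H (f x, j)) y ∂ν = w (f x) j / a (f x) := by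
      intro j
      rw [lintegral_indicator (hTm j), setLIntegral_const]
      rcases eq_or_ne (b j) 0 with h0 | h0
      · have hw0 : w (f x) j = 0 := le_antisymm (h0 ▸ hwb _ _) zero_le
        simp [hH, hw0]
      · have hbb : (b j)⁻¹ * b j = 1 := ENNReal.inv_mul_cancel h0 (measure_ne_top ν _)
        calc H (f x, j) * ν (T j)
            = w (f x) j * (a (f x))⁻¹ * ((b j)⁻¹ * b j) := by
              rw [hH]
              simp only
              rw [div_eq_mul_inv, ENNReal.mul_inv (Or.inr (measure_ne_top ν _)) (Or.inr h0)]
              ring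
          _ = w (f x) j / a (f x) := by rw [hbb, mul_one, div_eq_mul_inv]
    calc ∑ j, ∫⁻ y, (T j).indicator (fun _ => H (f x, j)) y ∂ν
        = ∑ j, w (f x) j / a (f x) := by
          exact Finset.sum_congr rfl (fun j _ => hterm j)
      _ = (∑ j, w (f x) j) / a (f x) := by
          simp_rw [div_eq_mul_inv, ← Finset.sum_mul]
      _ = 1 := by rw [hsumj (f x), ENNReal.div_self hx (measure_ne_top μ _)]
  have hinner2 : ∀ y : Y, b (g y) ≠ 0 → ∫⁻ x, h (x, y) ∂μ = 1 := by
    intro y hy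
    have hpt : (fun x => h (x, y)) =
        fun x => ∑ i, (S i).indicator (fun _ => H (i, g y)) x := by
      funext x
      rw [Finset.sum_eq_single_of_mem (f x) (Finset.mem_univ _)]
      · rw [Set.indicator_of_mem (by simp [hS] : x ∈ S (f x))]
      · intro i _ hi
        refine Set.indicator_of_notMem ?_ _
        simp only [hS, Set.mem_preimage, Set.mem_singleton_iff]
        exact fun hc => hi hc.symm
    rw [hpt, lintegral_finset_sum _ (fun i _ => measurable_const.indicator (hSm i))]
    have hterm : ∀ i, ∫⁻ x, (S i).indicator (fun _ => H (i, g y)) x ∂μ = w i (g y) / b (g y) := by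
      intro i
      rw [lintegral_indicator (hSm i), setLIntegral_const]
      rcases eq_or_ne (a i) 0 with h0 | h0
      · have hw0 : w i (g y) = 0 := le_antisymm (h0 ▸ hwa _ _) zero_le
        simp [hH, hw0]
      · have haa : (a i)⁻¹ * a i = 1 := ENNReal.inv_mul_cancel h0 (measure_ne_top μ _)
        calc H (i, g y) * μ (S i)
            = w i (g y) * (b (g y))⁻¹ * ((a i)⁻¹ * a i) := by
              rw [hH]
              simp only
              rw [div_eq_mul_inv, ENNReal.mul_inv (Or.inr (measure_ne_top ν _)) (Or.inl (measure_ne_top μ _))]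
              ring
          _ = w i (g y) / b (g y) := by rw [haa, mul_one, div_eq_mul_inv]
    calc ∑ i, ∫⁻ x, (S i).indicator (fun _ => H (i, g y)) x ∂μ
        = ∑ i, w i (g y) / b (g y) := Finset.sum_congr rfl (fun i _ => hterm i)
      _ = (∑ i, w i (g y)) / b (g y) := by
          simp_rw [div_eq_mul_inv, ← Finset.sum_mul]
      _ = 1 := by rw [hsumi (g y), ENNReal.div_self hy (measure_ne_top ν _)]
  have haefst : ∀ᵐ x ∂μ, ∫⁻ y, h (x, y) ∂ν = 1 := by
    have h1 : ∀ᵐ x ∂μ, a (f x) ≠ 0 := by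
      rw [ae_iff]
      simp only [not_not]
      refine measure_mono_null (fun x hx => ?_)
        ((measure_biUnion_null_iff (Set.to_countable _)).mpr
          (fun i (hi : i ∈ {i : Fin n | a i = 0}) => hi))
      exact Set.mem_biUnion (by exact hx) (by simp [hS])
    filter_upwards [h1] with x hx using hinner1 x hx
  have haesnd : ∀ᵐ y ∂ν, ∫⁻ x, h (x, y) ∂μ = 1 := by
    have h1 : ∀ᵐ y ∂ν, b (g y) ≠ 0 := by
      rw [ae_iff]
      simp only [not_not]
      refine measure_mono_null (fun y hy => ?_)
        ((measure_biUnion_null_iff (Set.to_countable _)).mpr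
          (fun j (hj : j ∈ {j : Fin m | b j = 0}) => hj))
      exact Set.mem_biUnion (by exact hy) (by simp [hT])
    filter_upwards [h1] with y hy using hinner2 y hy
  have hm1 := map_fst_withDensity μ ν hhmeas haefst
  have hm2 := map_snd_withDensity μ ν hhmeas haesnd
  refine ⟨M, h, hMfin, hhmeas, hhM, isPlan_of_marginals hm1 hm2, ?_⟩
  have hkm : Measurable (fun p : X × Y => (f p.1, g p.2)) :=
    (hf.comp measurable_fst).prodMk (hg.comp measurable_snd)
  have hker : ∀ i j, (fun p : X × Y => (f p.1, g p.2)) ⁻¹' {(i, j)} = S i ×ˢ T j := by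
    intro i j
    ext p
    simp [hS, hT, Prod.ext_iff, Set.mem_prod]
  apply Measure.ext_of_singleton
  rintro ⟨i, j⟩
  rw [Measure.map_apply hkm (measurableSet_singleton _),
    Measure.map_apply hkm (measurableSet_singleton _), hker i j,
    withDensity_apply _ ((hSm i).prod (hTm j))]
  have hconst : ∀ᵐ p ∂(μ.prod ν), p ∈ S i ×ˢ T j → h p = H (i, j) := by
    refine Filter.Eventually.of_forall ?_
    rintro ⟨x, y⟩ ⟨hx, hy⟩
    simp only [hS, Set.mem_preimage, Set.mem_singleton_iff] at hx
    simp only [hT, Set.mem_preimage, Set.mem_singleton_iff] at hy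
    simp [hh, hx, hy]
  rw [setLIntegral_congr_fun_ae ((hSm i).prod (hTm j)) hconst, setLIntegral_const,
    Measure.prod_prod]
  rcases eq_or_ne (a i) 0 with h0 | h0
  · have hw0 : w i j = 0 := le_antisymm (h0 ▸ hwa _ _) zero_le
    have hH0 : H (i, j) = 0 := by simp [hH, hw0]
    rw [hH0, zero_mul]
    exact hw0.symm
  rcases eq_or_ne (b j) 0 with h1 | h1
  · have hw0 : w i j = 0 := le_antisymm (h1 ▸ hwb _ _) zero_le
    have hH0 : H (i, j) = 0 := by simp [hH, hw0]
    rw [hH0, zero_mul]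
    exact hw0.symm
  · exact ENNReal.div_mul_cancel (mul_ne_zero h0 h1)
      (ENNReal.mul_ne_top (measure_ne_top μ _) (measure_ne_top ν _))

theorem stmt11
    {X Y : Type*}
    [MetricSpace X] [CompactSpace X] [MeasurableSpace X] [BorelSpace X]
    [MetricSpace Y] [CompactSpace Y] [MeasurableSpace Y] [BorelSpace Y]
    (μ : Measure X) [IsProbabilityMeasure μ] [μ.IsOpenPosMeasure]
    (ν : Measure Y) [IsProbabilityMeasure ν] [ν.IsOpenPosMeasure]
    (c : X × Y → ℝ) (L : ℝ)
    (hc : ∀ p q : X × Y, |c p - c q| ≤ L * (dist p.1 q.1 + dist p.2 q.2))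
    (A : X × Y → ℝ) (hA : A = fun p => - c p)
    (φF : ℝ → X → ℝ) (ψF : ℝ → Y → ℝ)
    (hφc : ∀ β : ℝ, 0 < β → Continuous (φF β))
    (hψc : ∀ β : ℝ, 0 < β → Continuous (ψF β))
    (h1 : ∀ β : ℝ, 0 < β → ∀ y : Y,
      ∫ x, Real.exp (β * A (x, y) + φF β x + ψF β y) ∂μ = 1)
    (h2 : ∀ β : ℝ, 0 < β → ∀ x : X,
      ∫ y, Real.exp (β * A (x, y) + φF β x + ψF β y) ∂ν = 1)
    (πF : ℝ → Measure (X × Y))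
    (hπF : ∀ β : ℝ, πF β = (μ.prod ν).withDensity
      (fun p => ENNReal.ofReal (Real.exp (β * A p + φF β p.1 + ψF β p.2))))
    (βs : ℕ → ℝ) (hβpos : ∀ n, 0 < βs n) (hβtop : Tendsto βs atTop atTop)
    (πinf : Measure (X × Y)) [IsProbabilityMeasure πinf]
    (hacc : ∀ f : X × Y → ℝ, Continuous f →
      Tendsto (fun n => ∫ p, f p ∂(πF (βs n))) atTop (nhds (∫ p, f p ∂πinf)))
    :
    IsPlan μ ν πinf ∧ ∫ p, c p ∂πinf = transportCost μ ν c := by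
  classical
  haveI : Nonempty X := nonempty_of_prob μ
  haveI : Nonempty Y := nonempty_of_prob ν
  -- Lipschitz constant and continuity of c
  have hL'pos : (0:ℝ) < |L| + 1 := by positivity
  have hc' : ∀ p q : X × Y, |c p - c q| ≤ (|L| + 1) * (dist p.1 q.1 + dist p.2 q.2) := by
    intro p q
    refine (hc p q).trans (mul_le_mul_of_nonneg_right ?_ ?_)
    · linarith [le_abs_self L]
    · positivity
  have hccont : Continuous c := by
    refine (LipschitzWith.of_dist_le_mul (K := Real.toNNReal (2 * (|L| + 1)))
      (f := c) ?_).continuous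
    intro p q
    rw [Real.dist_eq]
    have hd1 : dist p.1 q.1 ≤ dist p q := by rw [Prod.dist_eq]; exact le_max_left _ _
    have hd2 : dist p.2 q.2 ≤ dist p q := by rw [Prod.dist_eq]; exact le_max_right _ _
    calc |c p - c q| ≤ (|L| + 1) * (dist p.1 q.1 + dist p.2 q.2) := hc' p q
      _ ≤ (|L| + 1) * (dist p q + dist p q) := by
          apply mul_le_mul_of_nonneg_left (by linarith) (by positivity)
      _ = (2 * (|L| + 1)) * dist p q := by ring
      _ = (Real.toNNReal (2 * (|L| + 1)) : ℝ) * dist p q := by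
          rw [Real.coe_toNNReal _ (by positivity)]
  have hAcont : Continuous A := by rw [hA]; exact hccont.neg
  obtain ⟨Mc, hMc0, hMc⟩ := aux_bound hccont
  -- the plans form a nonempty set
  haveI hplans_ne : Nonempty {π : Measure (X × Y) // IsPlan μ ν π} := by
    refine ⟨⟨μ.prod ν, isPlan_of_marginals ?_ ?_⟩⟩
    · exact Measure.fst_prod
    · exact Measure.snd_prod
  have hbdd : BddBelow (Set.range fun π : {π : Measure (X × Y) // IsPlan μ ν π} =>
      ∫ p, c p ∂(π.1)) := by
    refine ⟨-Mc, ?_⟩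
    rintro r ⟨π, rfl⟩
    haveI := π.2.1
    have h1 : ∫ _p, (-Mc) ∂(π.1) ≤ ∫ p, c p ∂(π.1) :=
      integral_mono (integrable_const _) (aux_integrable _ hccont)
        (fun p => neg_le_of_abs_le (hMc p))
    simpa using h1
  -- each πF β is a plan
  have hπFplan : ∀ β : ℝ, 0 < β → IsPlan μ ν (πF β) := by
    intro β hβ
    have hGcont : Continuous fun p : X × Y => β * A p + φF β p.1 + ψF β p.2 :=
      ((continuous_const.mul hAcont).add ((hφc β hβ).comp continuous_fst)).add
        ((hψc β hβ).comp continuous_snd)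
    have hwmeas : Measurable fun p : X × Y =>
        ENNReal.ofReal (Real.exp (β * A p + φF β p.1 + ψF β p.2)) :=
      (Real.continuous_exp.comp hGcont).measurable.ennreal_ofReal
    rw [hπF β]
    apply isPlan_of_marginals
    · apply map_fst_withDensity μ ν hwmeas
      refine Filter.Eventually.of_forall (fun x => ?_)
      have hicont : Continuous fun y => Real.exp (β * A (x, y) + φF β x + ψF β y) :=
        (Real.continuous_exp.comp hGcont).comp (Continuous.prodMk_right x)
      rw [← ofReal_integral_eq_lintegral_ofReal (aux_integrable ν hicont)
        (Filter.Eventually.of_forall fun y => (Real.exp_pos _).le), h2 β hβ x,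
        ENNReal.ofReal_one]
    · apply map_snd_withDensity μ ν hwmeas
      refine Filter.Eventually.of_forall (fun y => ?_)
      have hicont : Continuous fun x => Real.exp (β * A (x, y) + φF β x + ψF β y) :=
        (Real.continuous_exp.comp hGcont).comp (continuous_id.prodMk continuous_const)
      rw [← ofReal_integral_eq_lintegral_ofReal (aux_integrable μ hicont)
        (Filter.Eventually.of_forall fun x => (Real.exp_pos _).le), h1 β hβ y,
        ENNReal.ofReal_one]
  -- marginals of πinf
  have hfstinf : πinf.map Prod.fst = μ := by
    haveI : IsProbabilityMeasure (πinf.map Prod.fst) :=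
      Measure.isProbabilityMeasure_map measurable_fst.aemeasurable
    apply measure_ext_cont
    intro φ hφ
    have e1 : ∫ z, φ z ∂(πinf.map Prod.fst) = ∫ p, φ p.1 ∂πinf :=
      integral_map measurable_fst.aemeasurable hφ.measurable.aestronglyMeasurable
    have e2 : ∀ nn, ∫ p, φ p.1 ∂(πF (βs nn)) = ∫ z, φ z ∂μ := by
      intro nn
      rw [← (hπFplan (βs nn) (hβpos nn)).2.1,
        integral_map measurable_fst.aemeasurable hφ.measurable.aestronglyMeasurable]
    have h3 := hacc (fun p => φ p.1) (hφ.comp continuous_fst)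
    rw [show (fun nn => ∫ p, φ p.1 ∂(πF (βs nn))) = fun _ => ∫ z, φ z ∂μ from funext e2] at h3
    have h4 := tendsto_nhds_unique h3 tendsto_const_nhds
    rw [e1, ← h4]
  have hsndinf : πinf.map Prod.snd = ν := by
    haveI : IsProbabilityMeasure (πinf.map Prod.snd) :=
      Measure.isProbabilityMeasure_map measurable_snd.aemeasurable
    apply measure_ext_cont
    intro φ hφ
    have e1 : ∫ z, φ z ∂(πinf.map Prod.snd) = ∫ p, φ p.2 ∂πinf :=
      integral_map measurable_snd.aemeasurable hφ.measurable.aestronglyMeasurable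
    have e2 : ∀ nn, ∫ p, φ p.2 ∂(πF (βs nn)) = ∫ z, φ z ∂ν := by
      intro nn
      rw [← (hπFplan (βs nn) (hβpos nn)).2.2,
        integral_map measurable_snd.aemeasurable hφ.measurable.aestronglyMeasurable]
    have h3 := hacc (fun p => φ p.2) (hφ.comp continuous_snd)
    rw [show (fun nn => ∫ p, φ p.2 ∂(πF (βs nn))) = fun _ => ∫ z, φ z ∂ν from funext e2] at h3
    have h4 := tendsto_nhds_unique h3 tendsto_const_nhds
    rw [e1, ← h4]
  have hplaninf : IsPlan μ ν πinf := ⟨inferInstance, hfstinf, hsndinf⟩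
  refine ⟨hplaninf, le_antisymm ?_ (ciInf_le hbdd ⟨πinf, hplaninf⟩)⟩
  -- it remains: ∫ c ∂πinf ≤ transportCost μ ν c
  by_contra hcon
  push_neg at hcon
  set ε := ∫ p, c p ∂πinf - transportCost μ ν c with hε
  have hεpos : 0 < ε := by simpa [hε] using sub_pos.mpr hcon
  -- near-optimal plan
  obtain ⟨πsS, hπsS⟩ := exists_lt_of_ciInf_lt
    (show (⨅ π : {π : Measure (X × Y) // IsPlan μ ν π}, ∫ p, c p ∂(π.1))
        < transportCost μ ν c + ε/4 by
      rw [transportCost]; linarith [hεpos])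
  haveI hprobS := πsS.2.1
  -- partitions
  have hδpos : (0:ℝ) < ε / (16 * (|L| + 1)) := by positivity
  obtain ⟨n, u, f, hfmeas, hfu⟩ := exists_partition (Z := X) hδpos
  obtain ⟨m, v, g, hgmeas, hgv⟩ := exists_partition (Z := Y) hδpos
  obtain ⟨M, h, hMfin, hhmeas, hhM, hhplan, hhmap⟩ := block_plan μ ν hfmeas hgmeas πsS.1 πsS.2
  haveI hprobhat := hhplan.1
  -- cost of block plan close to cost of πsS
  have hkmeas : Measurable (fun p : X × Y => (f p.1, g p.2)) :=
    (hfmeas.comp measurable_fst).prodMk (hgmeas.comp measurable_snd)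
  have hCmeas : Measurable (fun p : X × Y => c (u (f p.1), v (g p.2))) :=
    (measurable_of_finite (fun q : Fin n × Fin m => c (u q.1, v q.2))).comp hkmeas
  have hCint : ∀ (π : Measure (X × Y)), IsProbabilityMeasure π →
      Integrable (fun p : X × Y => c (u (f p.1), v (g p.2))) π := by
    intro π hπ
    exact Integrable.mono' (integrable_const Mc) hCmeas.aestronglyMeasurable
      (Filter.Eventually.of_forall fun p => by
        rw [Real.norm_eq_abs]; exact hMc _)
  have hCbar_eq : ∫ p, c (u (f p.1), v (g p.2)) ∂((μ.prod ν).withDensity h)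
      = ∫ p, c (u (f p.1), v (g p.2)) ∂(πsS.1) := by
    have hCs : AEStronglyMeasurable (fun q : Fin n × Fin m => c (u q.1, v q.2))
        ((πsS.1).map (fun p : X × Y => (f p.1, g p.2))) :=
      (measurable_of_finite _).aestronglyMeasurable
    have hCs' : AEStronglyMeasurable (fun q : Fin n × Fin m => c (u q.1, v q.2))
        (((μ.prod ν).withDensity h).map (fun p : X × Y => (f p.1, g p.2))) :=
      (measurable_of_finite _).aestronglyMeasurable
    rw [← integral_map hkmeas.aemeasurable hCs', hhmap, integral_map hkmeas.aemeasurable hCs]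
  have hdiff : ∀ p : X × Y, |c p - c (u (f p.1), v (g p.2))| ≤ ε/4 := by
    intro p
    calc |c p - c (u (f p.1), v (g p.2))|
        ≤ (|L| + 1) * (dist p.1 (u (f p.1)) + dist p.2 (v (g p.2))) := hc' p _
      _ ≤ (|L| + 1) * (ε / (16 * (|L| + 1)) + ε / (16 * (|L| + 1))) := by
          apply mul_le_mul_of_nonneg_left _ (by positivity)
          exact add_le_add (hfu p.1).le (hgv p.2).le
      _ = ε/8 := by field_simp; ring
      _ ≤ ε/4 := by linarith
  have hcost1 : ∫ p, c p ∂((μ.prod ν).withDensity h) ≤ ∫ p, c p ∂(πsS.1) + ε/2 := by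
    have e1 : ∫ p, c p ∂((μ.prod ν).withDensity h)
        ≤ ∫ p, (c (u (f p.1), v (g p.2)) + ε/4) ∂((μ.prod ν).withDensity h) := by
      refine integral_mono (aux_integrable _ hccont)
        ((hCint _ hprobhat).add (integrable_const _)) (fun p => ?_)
      have := hdiff p
      have := abs_le.mp this
      linarith [this.2]
    have e2 : ∫ p, c (u (f p.1), v (g p.2)) ∂(πsS.1)
        ≤ ∫ p, (c p + ε/4) ∂(πsS.1) := by
      refine integral_mono (hCint _ hprobS)
        ((aux_integrable _ hccont).add (integrable_const _)) (fun p => ?_)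
      have := abs_le.mp (hdiff p)
      linarith [this.1]
    rw [integral_add (hCint _ hprobhat) (integrable_const _), integral_const,
      probReal_univ, one_smul] at e1
    rw [integral_add (aux_integrable _ hccont) (integrable_const _), integral_const,
      probReal_univ, one_smul] at e2
    linarith [hCbar_eq]
  -- Gibbs comparison for each n
  have hkey : ∀ nn : ℕ, ∫ p, c p ∂(πF (βs nn))
      ≤ ∫ p, c p ∂((μ.prod ν).withDensity h) + M.toReal / βs nn := by
    intro nn
    have hβ := hβpos nn
    have hGcont : Continuous fun p : X × Y =>
        βs nn * A p + φF (βs nn) p.1 + ψF (βs nn) p.2 :=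
      ((continuous_const.mul hAcont).add ((hφc _ hβ).comp continuous_fst)).add
        ((hψc _ hβ).comp continuous_snd)
    have hnorm : ∫ p, Real.exp (βs nn * A p + φF (βs nn) p.1 + ψF (βs nn) p.2)
        ∂(μ.prod ν) = 1 := by
      have hexpint : Integrable
          (fun p : X × Y => Real.exp (βs nn * A p + φF (βs nn) p.1 + ψF (βs nn) p.2))
          (μ.prod ν) := aux_integrable _ (Real.continuous_exp.comp hGcont)
      rw [integral_prod _ hexpint]
      have hin : ∀ x, ∫ y, Real.exp (βs nn * A (x, y) + φF (βs nn) x + ψF (βs nn) y) ∂ν = 1 :=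
        h2 _ hβ
      simp only [hin, integral_const, probReal_univ, one_smul]
    have hlow := gibbs_lower (μ.prod ν) hGcont hnorm
    have hup := gibbs_upper (μ.prod ν) hGcont hnorm hhmeas hMfin hhM
    rw [← hπF (βs nn)] at hlow
    have hsplit : ∀ (π : Measure (X × Y)), IsPlan μ ν π →
        ∫ p, (βs nn * A p + φF (βs nn) p.1 + ψF (βs nn) p.2) ∂π
          = βs nn * ∫ p, A p ∂π + (∫ x, φF (βs nn) x ∂μ + ∫ y, ψF (βs nn) y ∂ν) := by
      intro π hπ
      haveI := hπ.1
      have i1 : Integrable (fun p : X × Y => βs nn * A p) π :=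
        aux_integrable _ (continuous_const.mul hAcont)
      have i2 : Integrable (fun p : X × Y => φF (βs nn) p.1) π :=
        aux_integrable _ ((hφc _ hβ).comp continuous_fst)
      have i3 : Integrable (fun p : X × Y => ψF (βs nn) p.2) π :=
        aux_integrable _ ((hψc _ hβ).comp continuous_snd)
      have m1 : ∫ p, φF (βs nn) p.1 ∂π = ∫ x, φF (βs nn) x ∂μ := by
        rw [← hπ.2.1, integral_map measurable_fst.aemeasurable
          (hφc _ hβ).measurable.aestronglyMeasurable]
      have m2 : ∫ p, ψF (βs nn) p.2 ∂π = ∫ y, ψF (βs nn) y ∂ν := by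
        rw [← hπ.2.2, integral_map measurable_snd.aemeasurable
          (hψc _ hβ).measurable.aestronglyMeasurable]
      have i12 : Integrable (fun p : X × Y => βs nn * A p + φF (βs nn) p.1) π := i1.add i2
      rw [integral_add i12 i3, integral_add i1 i2, integral_const_mul, m1, m2]
      ring
    have e1 := hsplit (πF (βs nn)) (hπFplan _ hβ)
    have e2 := hsplit ((μ.prod ν).withDensity h) hhplan
    rw [e1] at hlow
    rw [e2] at hup
    have hAF : ∫ p, A p ∂(πF (βs nn)) = - ∫ p, c p ∂(πF (βs nn)) := by
      haveI := (hπFplan _ hβ).1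
      rw [hA]; exact integral_neg c
    have hAhat : ∫ p, A p ∂((μ.prod ν).withDensity h)
        = - ∫ p, c p ∂((μ.prod ν).withDensity h) := by
      rw [hA]; exact integral_neg c
    rw [hAF] at hlow
    rw [hAhat] at hup
    have hmul : βs nn * ∫ p, c p ∂(πF (βs nn))
        ≤ βs nn * ∫ p, c p ∂((μ.prod ν).withDensity h) + M.toReal := by nlinarith
    rw [div_eq_mul_inv]
    have hβinv : 0 < (βs nn)⁻¹ := inv_pos.mpr hβ
    calc ∫ p, c p ∂(πF (βs nn))
        = (βs nn * ∫ p, c p ∂(πF (βs nn))) * (βs nn)⁻¹ := by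
          field_simp
      _ ≤ (βs nn * ∫ p, c p ∂((μ.prod ν).withDensity h) + M.toReal) * (βs nn)⁻¹ := by
          exact mul_le_mul_of_nonneg_right hmul hβinv.le
      _ = ∫ p, c p ∂((μ.prod ν).withDensity h) + M.toReal * (βs nn)⁻¹ := by
          field_simp
  -- pass to the limit
  have hlim1 := hacc c hccont
  have hlim2 : Tendsto (fun nn => ∫ p, c p ∂((μ.prod ν).withDensity h) + M.toReal / βs nn)
      atTop (nhds (∫ p, c p ∂((μ.prod ν).withDensity h) + 0)) := by
    apply Tendsto.add tendsto_const_nhds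
    have hinv : Tendsto (fun nn => (βs nn)⁻¹) atTop (nhds 0) := hβtop.inv_tendsto_atTop
    have := hinv.const_mul M.toReal
    rw [mul_zero] at this
    simpa [div_eq_mul_inv] using this
  have hle := le_of_tendsto_of_tendsto' hlim1 hlim2 hkey
  rw [add_zero] at hle
  have : ∫ p, c p ∂πinf ≤ transportCost μ ν c + ε/4 + ε/2 := by
    calc ∫ p, c p ∂πinf ≤ ∫ p, c p ∂((μ.prod ν).withDensity h) := hle
      _ ≤ ∫ p, c p ∂(πsS.1) + ε/2 := hcost1
      _ ≤ transportCost μ ν c + ε/4 + ε/2 := by linarith [hπsS]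
  have : transportCost μ ν c + ε ≤ transportCost μ ν c + ε/4 + ε/2 := by
    rw [hε] at this ⊢
    linarith
  linarith
end

section
/- For each β > 0 let (φ_β, ψ_β) be a pair of β-potentials and let π_β be the probability measure on X×Y with density e^{βA+φ_β+ψ_β} with respect to μ×ν. Suppose φ_β/β → φ uniformly and ψ_β/β → ψ uniformly as β → +∞. Then for every continuous f : X×Y → ℝ, lim_{β→+∞} (1/β) log ∫ e^{βf} dπ_β = sup_{(x,y)∈X×Y} [A(x,y) + φ(x) + ψ(y) + f(x,y)]. -/
open MeasureTheory Filter

theorem stmt14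
    {X Y : Type*}
    [MetricSpace X] [CompactSpace X] [MeasurableSpace X] [BorelSpace X]
    [MetricSpace Y] [CompactSpace Y] [MeasurableSpace Y] [BorelSpace Y]
    (μ : Measure X) [IsProbabilityMeasure μ] [μ.IsOpenPosMeasure]
    (ν : Measure Y) [IsProbabilityMeasure ν] [ν.IsOpenPosMeasure]
    (c : X × Y → ℝ) (L : ℝ)
    (hc : ∀ p q : X × Y, |c p - c q| ≤ L * (dist p.1 q.1 + dist p.2 q.2))
    (A : X × Y → ℝ) (hA : A = fun p => - c p)
    (φF : ℝ → X → ℝ) (ψF : ℝ → Y → ℝ)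
    (hφc : ∀ β : ℝ, 0 < β → Continuous (φF β))
    (hψc : ∀ β : ℝ, 0 < β → Continuous (ψF β))
    (h1 : ∀ β : ℝ, 0 < β → ∀ y : Y,
      ∫ x, Real.exp (β * A (x, y) + φF β x + ψF β y) ∂μ = 1)
    (h2 : ∀ β : ℝ, 0 < β → ∀ x : X,
      ∫ y, Real.exp (β * A (x, y) + φF β x + ψF β y) ∂ν = 1)
    (πF : ℝ → Measure (X × Y))
    (hπF : ∀ β : ℝ, πF β = (μ.prod ν).withDensity
      (fun p => ENNReal.ofReal (Real.exp (β * A p + φF β p.1 + ψF β p.2))))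
    (φ : X → ℝ) (ψ : Y → ℝ)
    (hφ : TendstoUniformly (fun β x => φF β x / β) φ atTop)
    (hψ : TendstoUniformly (fun β y => ψF β y / β) ψ atTop)
    (f : X × Y → ℝ) (hf : Continuous f) :
    Tendsto
      (fun β : ℝ => β⁻¹ * Real.log (∫ p, Real.exp (β * f p) ∂(πF β)))
      atTop
      (nhds (⨆ p : X × Y, (A p + φ p.1 + ψ p.2 + f p))) := by
  -- nonemptiness
  have hXne : Nonempty X := by
    by_contra h
    rw [not_nonempty_iff] at h
    have h1 := measure_univ (μ := μ)
    rw [Set.univ_eq_empty_iff.2 h, measure_empty] at h1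
    exact zero_ne_one h1
  have hYne : Nonempty Y := by
    by_contra h
    rw [not_nonempty_iff] at h
    have h1 := measure_univ (μ := ν)
    rw [Set.univ_eq_empty_iff.2 h, measure_empty] at h1
    exact zero_ne_one h1
  -- continuity of c, A
  have hcc : Continuous c := by
    refine (LipschitzWith.of_dist_le_mul (K := (2 * |L|).toNNReal) ?_).continuous
    intro p q
    rw [Real.coe_toNNReal _ (by positivity), Real.dist_eq]
    have hd1 : dist p.1 q.1 ≤ dist p q := by rw [Prod.dist_eq]; exact le_max_left _ _
    have hd2 : dist p.2 q.2 ≤ dist p q := by rw [Prod.dist_eq]; exact le_max_right _ _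
    calc |c p - c q| ≤ L * (dist p.1 q.1 + dist p.2 q.2) := hc p q
      _ ≤ |L| * (dist p.1 q.1 + dist p.2 q.2) := by
          apply mul_le_mul_of_nonneg_right (le_abs_self L)
          positivity
      _ ≤ |L| * (dist p q + dist p q) := by
          apply mul_le_mul_of_nonneg_left (by linarith) (abs_nonneg L)
      _ = 2 * |L| * dist p q := by ring
  have hAc : Continuous A := by rw [hA]; exact hcc.neg
  -- continuity of limits
  have hφcont : Continuous φ := by
    refine hφ.continuous ?_
    apply Eventually.frequently
    filter_upwards [eventually_ge_atTop (1 : ℝ)] with β hβ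
    exact (hφc β (by linarith)).div_const β
  have hψcont : Continuous ψ := by
    refine hψ.continuous ?_
    apply Eventually.frequently
    filter_upwards [eventually_ge_atTop (1 : ℝ)] with β hβ
    exact (hψc β (by linarith)).div_const β
  set g : X × Y → ℝ := fun p => A p + φ p.1 + ψ p.2 + f p with hg
  have hgc : Continuous g :=
    ((hAc.add (hφcont.comp continuous_fst)).add (hψcont.comp continuous_snd)).add hf
  set S : ℝ := ⨆ p : X × Y, (A p + φ p.1 + ψ p.2 + f p) with hSdef
  obtain ⟨p₀, hp₀⟩ : ∃ p₀ : X × Y, ∀ p, g p ≤ g p₀ := by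
    obtain ⟨p₀, -, h⟩ := isCompact_univ.exists_isMaxOn Set.univ_nonempty hgc.continuousOn
    exact ⟨p₀, fun p => h (Set.mem_univ p)⟩
  have hSle : ∀ p, g p ≤ S := fun p =>
    le_ciSup ⟨g p₀, by rintro _ ⟨p, rfl⟩; exact hp₀ p⟩ p
  have hSmax : S = g p₀ := le_antisymm (ciSup_le hp₀) (hSle p₀)
  -- integrability of continuous functions
  have hint : ∀ h : X × Y → ℝ, Continuous h → Integrable h (μ.prod ν) := fun h hh =>
    hh.integrable_of_hasCompactSupport (HasCompactSupport.of_compactSpace h)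
  -- key integral identity
  have key : ∀ β : ℝ, 0 < β →
      ∫ p, Real.exp (β * f p) ∂(πF β)
        = ∫ p, Real.exp (β * A p + φF β p.1 + ψF β p.2 + β * f p) ∂(μ.prod ν) := by
    intro β hβ
    rw [hπF β]
    have hdc : Continuous fun p : X × Y => β * A p + φF β p.1 + ψF β p.2 :=
      ((continuous_const.mul hAc).add ((hφc β hβ).comp continuous_fst)).add
        ((hψc β hβ).comp continuous_snd)
    have hmeas : Measurable fun p : X × Y =>
        (Real.exp (β * A p + φF β p.1 + ψF β p.2)).toNNReal :=
      (continuous_real_toNNReal.comp (Real.continuous_exp.comp hdc)).measurable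
    have h1 : (fun p : X × Y => ENNReal.ofReal (Real.exp (β * A p + φF β p.1 + ψF β p.2)))
        = fun p : X × Y =>
          ((Real.exp (β * A p + φF β p.1 + ψF β p.2)).toNNReal : ENNReal) := rfl
    rw [h1, integral_withDensity_eq_integral_smul hmeas]
    congr 1
    ext p
    rw [NNReal.smul_def, Real.coe_toNNReal _ (Real.exp_nonneg _), smul_eq_mul, ← Real.exp_add]
  -- main limit argument
  rw [Metric.tendsto_nhds]
  intro ε hε
  set δ : ℝ := ε / 8 with hδdef
  have hδ : 0 < δ := by positivity
  -- the set where g is close to its max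
  set U : Set (X × Y) := {p | S - δ < g p} with hU
  have hUopen : IsOpen U := isOpen_lt continuous_const hgc
  have hUne : U.Nonempty := ⟨p₀, by simp only [hU, Set.mem_setOf_eq, ← hSmax]; linarith⟩
  have hmU : 0 < (μ.prod ν) U := hUopen.measure_pos _ hUne
  have hmU' : (μ.prod ν) U ≠ ⊤ := measure_ne_top _ _
  set r : ℝ := ((μ.prod ν) U).toReal with hr
  have hrpos : 0 < r := ENNReal.toReal_pos hmU.ne' hmU'
  have hlog0 : Tendsto (fun β : ℝ => β⁻¹ * Real.log r) atTop (nhds 0) := by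
    have := tendsto_inv_atTop_zero.mul_const (Real.log r)
    simpa using this
  have hev := Metric.tendstoUniformly_iff.1 hφ δ hδ
  have hev' := Metric.tendstoUniformly_iff.1 hψ δ hδ
  have hev'' := (Metric.tendsto_nhds.1 hlog0) δ hδ
  filter_upwards [eventually_ge_atTop (1 : ℝ), hev, hev', hev''] with β hβ1 hφβ hψβ hlogβ
  have hβ : (0 : ℝ) < β := by linarith
  rw [key β hβ]
  set B : X × Y → ℝ := fun p => β * A p + φF β p.1 + ψF β p.2 + β * f p with hB
  have hBc : Continuous B :=
    (((continuous_const.mul hAc).add ((hφc β hβ).comp continuous_fst)).add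
      ((hψc β hβ).comp continuous_snd)).add (continuous_const.mul hf)
  have hBle : ∀ p, B p ≤ β * (S + 2 * δ) := by
    intro p
    have e1 : |φF β p.1 / β - φ p.1| < δ := by
      have := hφβ p.1; rw [Real.dist_eq, abs_sub_comm] at this; exact this
    have e2 : |ψF β p.2 / β - ψ p.2| < δ := by
      have := hψβ p.2; rw [Real.dist_eq, abs_sub_comm] at this; exact this
    rw [abs_sub_lt_iff] at e1 e2
    have hrw : B p = β * (A p + φF β p.1 / β + ψF β p.2 / β + f p) := by
      rw [hB]; field_simp
    rw [hrw]
    apply mul_le_mul_of_nonneg_left _ hβ.le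
    have := hSle p
    rw [hg] at this
    simp only at this ⊢
    linarith [e1.1, e1.2, e2.1, e2.2]
  have hBge : ∀ p ∈ U, β * (S - 3 * δ) ≤ B p := by
    intro p hp
    have e1 : |φF β p.1 / β - φ p.1| < δ := by
      have := hφβ p.1; rw [Real.dist_eq, abs_sub_comm] at this; exact this
    have e2 : |ψF β p.2 / β - ψ p.2| < δ := by
      have := hψβ p.2; rw [Real.dist_eq, abs_sub_comm] at this; exact this
    rw [abs_sub_lt_iff] at e1 e2
    have hrw : B p = β * (A p + φF β p.1 / β + ψF β p.2 / β + f p) := by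
      rw [hB]; field_simp
    rw [hrw]
    apply mul_le_mul_of_nonneg_left _ hβ.le
    have hp' : S - δ < g p := hp
    rw [hg] at hp'
    simp only at hp' ⊢
    linarith [e1.1, e1.2, e2.1, e2.2]
  have hIint : Integrable (fun p => Real.exp (B p)) (μ.prod ν) :=
    hint _ (Real.continuous_exp.comp hBc)
  set I : ℝ := ∫ p, Real.exp (B p) ∂(μ.prod ν) with hI
  have hIpos : 0 < I := integral_exp_pos hIint
  -- upper bound
  have hup : I ≤ Real.exp (β * (S + 2 * δ)) := by
    have : I ≤ ∫ _, Real.exp (β * (S + 2 * δ)) ∂(μ.prod ν) := by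
      apply integral_mono hIint (integrable_const _)
      intro p
      exact Real.exp_le_exp.2 (hBle p)
    simpa [measure_univ] using this
  have hup' : Real.log I ≤ β * (S + 2 * δ) := (Real.log_le_iff_le_exp hIpos).2 hup
  -- lower bound
  have hlow : r * Real.exp (β * (S - 3 * δ)) ≤ I := by
    have h3 : ∫ p in U, Real.exp (β * (S - 3 * δ)) ∂(μ.prod ν)
        ≤ ∫ p in U, Real.exp (B p) ∂(μ.prod ν) := by
      apply setIntegral_mono_on (integrableOn_const hmU')
        (hIint.integrableOn) hUopen.measurableSet
      intro p hp
      exact Real.exp_le_exp.2 (hBge p hp)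
    have h4 : ∫ p in U, Real.exp (B p) ∂(μ.prod ν) ≤ I := by
      apply setIntegral_le_integral hIint
      exact Filter.Eventually.of_forall fun p => (Real.exp_pos _).le
    have h5 : ∫ p in U, Real.exp (β * (S - 3 * δ)) ∂(μ.prod ν)
        = r * Real.exp (β * (S - 3 * δ)) := by
      rw [setIntegral_const, smul_eq_mul, measureReal_def]
    linarith
  have hlow' : Real.log r + β * (S - 3 * δ) ≤ Real.log I := by
    calc Real.log r + β * (S - 3 * δ)
        = Real.log (r * Real.exp (β * (S - 3 * δ))) := by
          rw [Real.log_mul hrpos.ne' (Real.exp_pos _).ne', Real.log_exp]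
      _ ≤ Real.log I := Real.log_le_log (by positivity) hlow
  -- conclude
  rw [Real.dist_eq, abs_sub_lt_iff]
  have hβinv : (0 : ℝ) < β⁻¹ := inv_pos.2 hβ
  have hc1 : β⁻¹ * Real.log I ≤ β⁻¹ * (β * (S + 2 * δ)) :=
    mul_le_mul_of_nonneg_left hup' hβinv.le
  have hc2 : β⁻¹ * (Real.log r + β * (S - 3 * δ)) ≤ β⁻¹ * Real.log I :=
    mul_le_mul_of_nonneg_left hlow' hβinv.le
  rw [← mul_assoc, inv_mul_cancel₀ hβ.ne', one_mul] at hc1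
  rw [mul_add, ← mul_assoc, inv_mul_cancel₀ hβ.ne', one_mul] at hc2
  have hlogβ' : |β⁻¹ * Real.log r| < δ := by
    rw [Real.dist_eq, sub_zero] at hlogβ; exact hlogβ
  rw [abs_lt] at hlogβ'
  constructor
  · calc β⁻¹ * Real.log I - S ≤ (S + 2 * δ) - S := by linarith
      _ < ε := by rw [hδdef]; linarith
  · calc S - β⁻¹ * Real.log I ≤ S - (β⁻¹ * Real.log r + (S - 3 * δ)) := by linarith
      _ < ε := by rw [hδdef] at *; linarith [hlogβ'.1]
end

section
/- For each β > 0 let (φ_β, ψ_β) be a pair of β-potentials and let π_β be the probability measure on X×Y with density e^{βA+φ_β+ψ_β} with respect to μ×ν. Suppose φ_β/β → φ uniformly and ψ_β/β → ψ uniformly as β → +∞, and set I(x,y) = c(x,y) − φ(x) − ψ(y). Then (π_β) satisfies a large deviation principle with rate function I: for every closed set C ⊆ X×Y, limsup_{β→+∞} (1/β) log π_β(C) ≤ −inf_{(x,y)∈C} I(x,y), and for every open set U ⊆ X×Y, liminf_{β→+∞} (1/β) log π_β(U) ≥ −inf_{(x,y)∈U} I(x,y). -/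
open MeasureTheory Filter

private lemma aux_le (a : EReal) (x : ℝ) (h : ∀ ε : ℝ, 0 < ε → a ≤ ((x + ε : ℝ) : EReal)) :
    a ≤ (x : EReal) := by
  induction a with
  | bot => exact bot_le
  | coe a =>
    exact EReal.coe_le_coe_iff.2
      (le_of_forall_pos_le_add fun ε hε => EReal.coe_le_coe_iff.1 (h ε hε))
  | top => exact absurd (h 1 one_pos) (not_le.2 (EReal.coe_lt_top (x + 1)))

private lemma aux_ge (a : EReal) (x : ℝ) (h : ∀ ε : ℝ, 0 < ε → ((x - ε : ℝ) : EReal) ≤ a) :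
    (x : EReal) ≤ a := by
  induction a with
  | bot => exact absurd (h 1 one_pos) (not_le.2 (EReal.bot_lt_coe (x - 1)))
  | coe a =>
    refine EReal.coe_le_coe_iff.2 (le_of_forall_pos_le_add fun ε hε => ?_)
    have := EReal.coe_le_coe_iff.1 (h ε hε)
    linarith
  | top => exact le_top

theorem stmt15
    {X Y : Type*}
    [MetricSpace X] [CompactSpace X] [MeasurableSpace X] [BorelSpace X]
    [MetricSpace Y] [CompactSpace Y] [MeasurableSpace Y] [BorelSpace Y]
    (μ : Measure X) [IsProbabilityMeasure μ] [μ.IsOpenPosMeasure]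
    (ν : Measure Y) [IsProbabilityMeasure ν] [ν.IsOpenPosMeasure]
    (c : X × Y → ℝ) (L : ℝ)
    (hc : ∀ p q : X × Y, |c p - c q| ≤ L * (dist p.1 q.1 + dist p.2 q.2))
    (A : X × Y → ℝ) (hA : A = fun p => - c p)
    (φF : ℝ → X → ℝ) (ψF : ℝ → Y → ℝ)
    (hφc : ∀ β : ℝ, 0 < β → Continuous (φF β))
    (hψc : ∀ β : ℝ, 0 < β → Continuous (ψF β))
    (h1 : ∀ β : ℝ, 0 < β → ∀ y : Y,
      ∫ x, Real.exp (β * A (x, y) + φF β x + ψF β y) ∂μ = 1)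
    (h2 : ∀ β : ℝ, 0 < β → ∀ x : X,
      ∫ y, Real.exp (β * A (x, y) + φF β x + ψF β y) ∂ν = 1)
    (πF : ℝ → Measure (X × Y))
    (hπF : ∀ β : ℝ, πF β = (μ.prod ν).withDensity
      (fun p => ENNReal.ofReal (Real.exp (β * A p + φF β p.1 + ψF β p.2))))
    (φ : X → ℝ) (ψ : Y → ℝ)
    (hφ : TendstoUniformly (fun β x => φF β x / β) φ atTop)
    (hψ : TendstoUniformly (fun β y => ψF β y / β) ψ atTop)
    (I : X × Y → ℝ) (hI : I = fun p => c p - φ p.1 - ψ p.2) :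
    (∀ C : Set (X × Y), IsClosed C →
      Filter.limsup (fun β : ℝ => ((β⁻¹ : ℝ) : EReal) * ENNReal.log (πF β C)) atTop ≤
        - ⨅ p ∈ C, ((I p : ℝ) : EReal)) ∧
    (∀ U : Set (X × Y), IsOpen U →
      - ⨅ p ∈ U, ((I p : ℝ) : EReal) ≤
        Filter.liminf (fun β : ℝ => ((β⁻¹ : ℝ) : EReal) * ENNReal.log (πF β U)) atTop) := by
  -- continuity facts
  have hccont : Continuous c := by
    have hlip : LipschitzWith (Real.toNNReal (2 * max L 0)) c := by
      apply LipschitzWith.of_dist_le_mul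
      intro p q
      rw [Real.dist_eq]
      have h1 : dist p.1 q.1 ≤ dist p q := by rw [Prod.dist_eq]; exact le_max_left _ _
      have h2 : dist p.2 q.2 ≤ dist p q := by rw [Prod.dist_eq]; exact le_max_right _ _
      have h0 : (0:ℝ) ≤ dist p q := dist_nonneg
      have h01 : (0:ℝ) ≤ dist p.1 q.1 := dist_nonneg
      have h02 : (0:ℝ) ≤ dist p.2 q.2 := dist_nonneg
      have hmax : (0:ℝ) ≤ max L 0 := le_max_right _ _
      have hL : L * (dist p.1 q.1 + dist p.2 q.2) ≤ max L 0 * (dist p.1 q.1 + dist p.2 q.2) :=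
        mul_le_mul_of_nonneg_right (le_max_left _ _) (by positivity)
      calc |c p - c q| ≤ max L 0 * (dist p.1 q.1 + dist p.2 q.2) := le_trans (hc p q) hL
        _ ≤ max L 0 * (2 * dist p q) := by nlinarith
        _ = (2 * max L 0) * dist p q := by ring
        _ = (Real.toNNReal (2 * max L 0) : ℝ) * dist p q := by
            rw [Real.coe_toNNReal _ (by positivity)]
    exact hlip.continuous
  have hAcont : Continuous A := by rw [hA]; exact hccont.neg
  have hφcont : Continuous φ := by
    apply hφ.continuous
    apply Eventually.frequently
    filter_upwards [eventually_gt_atTop (0:ℝ)] with β hβ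
    exact (hφc β hβ).div_const β
  have hψcont : Continuous ψ := by
    apply hψ.continuous
    apply Eventually.frequently
    filter_upwards [eventually_gt_atTop (0:ℝ)] with β hβ
    exact (hψc β hβ).div_const β
  have hIcont : Continuous I := by
    rw [hI]
    exact (hccont.sub (hφcont.comp continuous_fst)).sub (hψcont.comp continuous_snd)
  have hdmeas : ∀ β : ℝ, 0 < β →
      Measurable (fun p : X × Y => ENNReal.ofReal (Real.exp (β * A p + φF β p.1 + ψF β p.2))) := by
    intro β hβ
    exact ENNReal.measurable_ofReal.comp
      ((Real.continuous_exp.comp (((continuous_const.mul hAcont).add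
        ((hφc β hβ).comp continuous_fst)).add ((hψc β hβ).comp continuous_snd))).measurable)
  -- key uniform bound on the exponent
  have hkey : ∀ δ : ℝ, 0 < δ → ∀ᶠ β : ℝ in atTop, 0 < β ∧
      ∀ p : X × Y, β * (-(I p) - 2*δ) ≤ β * A p + φF β p.1 + ψF β p.2 ∧
        β * A p + φF β p.1 + ψF β p.2 ≤ β * (-(I p) + 2*δ) := by
    intro δ hδ
    have hu1 := (Metric.tendstoUniformly_iff.1 hφ) δ hδ
    have hu2 := (Metric.tendstoUniformly_iff.1 hψ) δ hδ
    filter_upwards [hu1, hu2, eventually_gt_atTop (0:ℝ)] with β hb1 hb2 hβ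
    refine ⟨hβ, fun p => ?_⟩
    have e1 := hb1 p.1
    have e2 := hb2 p.2
    rw [Real.dist_eq, abs_lt] at e1 e2
    have f1a : φ p.1 - δ ≤ φF β p.1 / β := by linarith [e1.2]
    have f1b : φF β p.1 / β ≤ φ p.1 + δ := by linarith [e1.1]
    have f2a : ψ p.2 - δ ≤ ψF β p.2 / β := by linarith [e2.2]
    have f2b : ψF β p.2 / β ≤ ψ p.2 + δ := by linarith [e2.1]
    have g1a : β * (φ p.1 - δ) ≤ φF β p.1 := by
      have := (le_div_iff₀ hβ).1 f1a; linarith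
    have g1b : φF β p.1 ≤ β * (φ p.1 + δ) := by
      have := (div_le_iff₀ hβ).1 f1b; linarith
    have g2a : β * (ψ p.2 - δ) ≤ ψF β p.2 := by
      have := (le_div_iff₀ hβ).1 f2a; linarith
    have g2b : ψF β p.2 ≤ β * (ψ p.2 + δ) := by
      have := (div_le_iff₀ hβ).1 f2b; linarith
    have hAp : A p = - c p := by rw [hA]
    have hIp : I p = c p - φ p.1 - ψ p.2 := by rw [hI]
    constructor
    · have expand : β * (-(I p) - 2*δ) = β * A p + β * (φ p.1 - δ) + β * (ψ p.2 - δ) := by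
        rw [hIp, hAp]; ring
      linarith
    · have expand : β * (-(I p) + 2*δ) = β * A p + β * (φ p.1 + δ) + β * (ψ p.2 + δ) := by
        rw [hIp, hAp]; ring
      linarith
  constructor
  · -- upper bound, closed sets
    intro C hC
    rcases C.eq_empty_or_nonempty with rfl | hne
    · have hrhs : - ⨅ p ∈ (∅ : Set (X × Y)), ((I p : ℝ) : EReal) = ⊥ := by simp
      rw [hrhs]
      refine limsup_le_of_le (by isBoundedDefault) ?_
      filter_upwards [eventually_gt_atTop (0:ℝ)] with β hβ
      have h0 : ((β⁻¹ : ℝ) : EReal) * ENNReal.log (πF β ∅) = ⊥ := by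
        rw [measure_empty, ENNReal.log_zero]
        exact EReal.mul_bot_of_pos (by exact_mod_cast inv_pos.2 hβ)
      exact h0.le
    · obtain ⟨p₀, hp₀C, hmin⟩ := (hC.isCompact).exists_isMinOn hne hIcont.continuousOn
      have hmin' : ∀ p ∈ C, I p₀ ≤ I p := fun p hp => hmin hp
      have hInf : (⨅ p ∈ C, ((I p : ℝ) : EReal)) = ((I p₀ : ℝ) : EReal) :=
        le_antisymm (iInf₂_le p₀ hp₀C)
          (le_iInf₂ fun p hp => EReal.coe_le_coe_iff.2 (hmin' p hp))
      rw [hInf, ← EReal.coe_neg]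
      refine aux_le _ _ fun ε hε => ?_
      apply limsup_le_of_le (by isBoundedDefault)
      filter_upwards [hkey (ε/2) (by positivity)] with β hb
      obtain ⟨hβ, hbd⟩ := hb
      have hπC : πF β C ≤ ENNReal.ofReal (Real.exp (β * (-(I p₀) + ε))) := by
        rw [hπF β, withDensity_apply _ hC.measurableSet]
        calc ∫⁻ p in C, ENNReal.ofReal (Real.exp (β * A p + φF β p.1 + ψF β p.2)) ∂(μ.prod ν)
            ≤ ∫⁻ _ in C, ENNReal.ofReal (Real.exp (β * (-(I p₀) + ε))) ∂(μ.prod ν) := by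
              apply setLIntegral_mono measurable_const
              intro p hp
              apply ENNReal.ofReal_le_ofReal
              apply Real.exp_le_exp.2
              have hb2 := (hbd p).2
              have hmono : β * (-(I p) + 2*(ε/2)) ≤ β * (-(I p₀) + ε) := by
                apply mul_le_mul_of_nonneg_left _ hβ.le
                have := hmin' p hp; linarith
              linarith
          _ = ENNReal.ofReal (Real.exp (β * (-(I p₀) + ε))) * (μ.prod ν) C :=
              setLIntegral_const _ _
          _ ≤ ENNReal.ofReal (Real.exp (β * (-(I p₀) + ε))) * 1 :=
              mul_le_mul_right prob_le_one _
          _ = ENNReal.ofReal (Real.exp (β * (-(I p₀) + ε))) := mul_one _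
      have hlog : ENNReal.log (πF β C) ≤ ((β * (-(I p₀) + ε) : ℝ) : EReal) := by
        calc ENNReal.log (πF β C)
            ≤ ENNReal.log (ENNReal.ofReal (Real.exp (β * (-(I p₀) + ε)))) :=
              ENNReal.log_monotone hπC
          _ = ((β * (-(I p₀) + ε) : ℝ) : EReal) := by
              rw [ENNReal.log_ofReal_of_pos (Real.exp_pos _), Real.log_exp]
      calc ((β⁻¹ : ℝ) : EReal) * ENNReal.log (πF β C)
          ≤ ((β⁻¹ : ℝ) : EReal) * ((β * (-(I p₀) + ε) : ℝ) : EReal) :=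
            mul_le_mul_of_nonneg_left hlog (by exact_mod_cast inv_nonneg.2 hβ.le)
        _ = ((β⁻¹ * (β * (-(I p₀) + ε)) : ℝ) : EReal) := by rw [← EReal.coe_mul]
        _ = ((-(I p₀) + ε : ℝ) : EReal) := by
            congr 1
            field_simp
  · -- lower bound, open sets
    intro U hU
    rw [EReal.neg_le]
    refine le_iInf₂ fun p₀ hp₀ => ?_
    rw [EReal.neg_le, ← EReal.coe_neg]
    refine aux_ge _ _ fun ε hε => ?_
    -- find a good ball
    have hnbd : ∀ᶠ p in nhds p₀, I p < I p₀ + ε/2 :=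
      (hIcont.tendsto p₀).eventually_lt_const (by linarith)
    have hev : ∀ᶠ p in nhds p₀, I p < I p₀ + ε/2 ∧ p ∈ U := hnbd.and (hU.mem_nhds hp₀)
    obtain ⟨r, hr, hball⟩ := Metric.eventually_nhds_iff_ball.1 hev
    have hBprod : Metric.ball p₀.1 r ×ˢ Metric.ball p₀.2 r = Metric.ball p₀ r :=
      ball_prod_same p₀.1 p₀.2 r
    have hKpos : 0 < (μ.prod ν) (Metric.ball p₀ r) := by
      rw [← hBprod, Measure.prod_prod]
      exact ENNReal.mul_pos
        (Metric.isOpen_ball.measure_pos μ (Metric.nonempty_ball.2 hr)).ne'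
        (Metric.isOpen_ball.measure_pos ν (Metric.nonempty_ball.2 hr)).ne'
    have hKne_top : (μ.prod ν) (Metric.ball p₀ r) ≠ ⊤ := measure_ne_top _ _
    set K : ℝ := ((μ.prod ν) (Metric.ball p₀ r)).toReal with hKdef
    have hK : 0 < K := ENNReal.toReal_pos hKpos.ne' hKne_top
    have hlow : ∀ᶠ β : ℝ in atTop,
        ((-(I p₀) - ε + β⁻¹ * Real.log K : ℝ) : EReal) ≤
          ((β⁻¹ : ℝ) : EReal) * ENNReal.log (πF β U) := by
      filter_upwards [hkey (ε/8) (by positivity)] with β hb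
      obtain ⟨hβ, hbd⟩ := hb
      have hπU : ENNReal.ofReal (Real.exp (β * (-(I p₀) - ε) + Real.log K)) ≤ πF β U := by
        rw [hπF β, withDensity_apply _ hU.measurableSet]
        calc ENNReal.ofReal (Real.exp (β * (-(I p₀) - ε) + Real.log K))
            = ENNReal.ofReal (Real.exp (β * (-(I p₀) - ε))) * (μ.prod ν) (Metric.ball p₀ r) := by
              rw [Real.exp_add, Real.exp_log hK, ENNReal.ofReal_mul (Real.exp_pos _).le, hKdef,
                ENNReal.ofReal_toReal hKne_top]
          _ = ∫⁻ _ in Metric.ball p₀ r, ENNReal.ofReal (Real.exp (β * (-(I p₀) - ε)))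
                ∂(μ.prod ν) := (setLIntegral_const _ _).symm
          _ ≤ ∫⁻ p in Metric.ball p₀ r,
                ENNReal.ofReal (Real.exp (β * A p + φF β p.1 + ψF β p.2)) ∂(μ.prod ν) := by
              apply setLIntegral_mono (hdmeas β hβ)
              intro p hp
              apply ENNReal.ofReal_le_ofReal
              apply Real.exp_le_exp.2
              have hb1 := (hbd p).1
              have hIlt : I p < I p₀ + ε/2 := (hball p hp).1
              have hmono : β * (-(I p₀) - ε) ≤ β * (-(I p) - 2*(ε/8)) := by
                apply mul_le_mul_of_nonneg_left _ hβ.le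
                linarith
              linarith
          _ ≤ ∫⁻ p in U, ENNReal.ofReal (Real.exp (β * A p + φF β p.1 + ψF β p.2))
                ∂(μ.prod ν) := lintegral_mono_set (fun p hp => (hball p hp).2)
      have hlog : ((β * (-(I p₀) - ε) + Real.log K : ℝ) : EReal) ≤ ENNReal.log (πF β U) := by
        calc ((β * (-(I p₀) - ε) + Real.log K : ℝ) : EReal)
            = ENNReal.log (ENNReal.ofReal (Real.exp (β * (-(I p₀) - ε) + Real.log K))) := by
              rw [ENNReal.log_ofReal_of_pos (Real.exp_pos _), Real.log_exp]
          _ ≤ ENNReal.log (πF β U) := ENNReal.log_monotone hπU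
      calc ((-(I p₀) - ε + β⁻¹ * Real.log K : ℝ) : EReal)
          = ((β⁻¹ * (β * (-(I p₀) - ε) + Real.log K) : ℝ) : EReal) := by
            congr 1
            field_simp
        _ = ((β⁻¹ : ℝ) : EReal) * ((β * (-(I p₀) - ε) + Real.log K : ℝ) : EReal) :=
            EReal.coe_mul _ _
        _ ≤ ((β⁻¹ : ℝ) : EReal) * ENNReal.log (πF β U) :=
            mul_le_mul_of_nonneg_left hlog (by exact_mod_cast inv_nonneg.2 hβ.le)
    calc ((-(I p₀) - ε : ℝ) : EReal)
        = liminf (fun β : ℝ => ((-(I p₀) - ε + β⁻¹ * Real.log K : ℝ) : EReal)) atTop := by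
          symm
          apply Filter.Tendsto.liminf_eq
          apply EReal.tendsto_coe.2
          have h0 : Tendsto (fun β : ℝ => β⁻¹ * Real.log K) atTop (nhds 0) := by
            simpa using tendsto_inv_atTop_zero.mul_const (Real.log K)
          simpa using tendsto_const_nhds.add h0
      _ ≤ liminf (fun β : ℝ => ((β⁻¹ : ℝ) : EReal) * ENNReal.log (πF β U)) atTop :=
          liminf_le_liminf hlow
end
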